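/- arXiv:1408.1886 — 3 statements merged into one kernel-verified Lean document; each statement's English description precedes it below -/
import Mathlib

section
/- Fix an integer m ≥ 2. Let aₘ(n) be the number of permutations of [n] all of whose alternating runs have length less than m (equivalently, among any m−1 consecutive indices in {1,…,n−1} at least one is an alternating descent); aₘ(0)=1. In ℚ⟦X⟧, let Aₘ be the power series whose coefficient of Xⁿ is Eₙ/n! if n ≡ 0 (mod m), −Eₙ/n! if n ≡ 1 (mod m), and 0 otherwise. Then Aₘ · (Σ_{n=0}^∞ aₘ(n)·Xⁿ/n!) = 1. -/
/-- The entry of the permutation `σ` of `[n]` at (1-based) position `i`,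
as a value in `{1, …, n}`; `0` if `i` is out of range. -/
def permEnt {n : ℕ} (σ : Equiv.Perm (Fin n)) (i : ℕ) : ℕ :=
  if h : 1 ≤ i ∧ i ≤ n then (σ ⟨i - 1, by omega⟩ : ℕ) + 1 else 0

/-- `i` is a descent of `σ`: `1 ≤ i ≤ n−1` and `π_i > π_{i+1}`. -/
def IsDescent {n : ℕ} (σ : Equiv.Perm (Fin n)) (i : ℕ) : Prop :=
  1 ≤ i ∧ i < n ∧ permEnt σ (i + 1) < permEnt σ i

/-- `i` is an alternating descent of `σ`: `i` odd with `π_i > π_{i+1}`,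
or `i` even with `π_i < π_{i+1}`. -/
def IsAltDescent {n : ℕ} (σ : Equiv.Perm (Fin n)) (i : ℕ) : Prop :=
  1 ≤ i ∧ i < n ∧
    ((i % 2 = 1 ∧ permEnt σ (i + 1) < permEnt σ i) ∨
     (i % 2 = 0 ∧ permEnt σ i < permEnt σ (i + 1)))

instance {n : ℕ} (σ : Equiv.Perm (Fin n)) (i : ℕ) : Decidable (IsDescent σ i) := by
  unfold IsDescent; infer_instance

instance {n : ℕ} (σ : Equiv.Perm (Fin n)) (i : ℕ) : Decidable (IsAltDescent σ i) := by
  unfold IsAltDescent; infer_instance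

/-- `i` is a peak of `σ`: `2 ≤ i ≤ n−1` and `π_{i−1} < π_i > π_{i+1}`. -/
def IsPeak {n : ℕ} (σ : Equiv.Perm (Fin n)) (i : ℕ) : Prop :=
  2 ≤ i ∧ i < n ∧ permEnt σ (i - 1) < permEnt σ i ∧ permEnt σ (i + 1) < permEnt σ i

/-- `i` is a valley of `σ`: `2 ≤ i ≤ n−1` and `π_{i−1} > π_i < π_{i+1}`. -/
def IsValley {n : ℕ} (σ : Equiv.Perm (Fin n)) (i : ℕ) : Prop :=
  2 ≤ i ∧ i < n ∧ permEnt σ i < permEnt σ (i - 1) ∧ permEnt σ i < permEnt σ (i + 1)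

/-- All valleys of `σ` are even and all peaks of `σ` are odd. -/
def GoodPerm {n : ℕ} (σ : Equiv.Perm (Fin n)) : Prop :=
  (∀ i, IsValley σ i → i % 2 = 0) ∧ (∀ i, IsPeak σ i → i % 2 = 1)

/-- `f n` is the number of permutations of `[n]` with all valleys even and all peaks odd. -/
noncomputable def fCount (n : ℕ) : ℕ :=
  Nat.card {σ : Equiv.Perm (Fin n) // GoodPerm σ}

/-- `g n` is the number of permutations of `[n]` with all valleys even and all peaks odd
having no descent at position `n − 1`. -/
noncomputable def gCount (n : ℕ) : ℕ :=
  Nat.card {σ : Equiv.Perm (Fin n) // GoodPerm σ ∧ ¬ IsDescent σ (n - 1)}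

/-- `σ` is an alternating permutation: `π₁ > π₂ < π₃ > π₄ < ⋯`. -/
def IsAltPerm {n : ℕ} (σ : Equiv.Perm (Fin n)) : Prop :=
  ∀ i, 1 ≤ i → i < n →
    (i % 2 = 1 → permEnt σ (i + 1) < permEnt σ i) ∧
    (i % 2 = 0 → permEnt σ i < permEnt σ (i + 1))

/-- The Euler number `Eₙ`, the number of alternating permutations of `[n]`. -/
noncomputable def eulerNum (n : ℕ) : ℕ :=
  Nat.card {σ : Equiv.Perm (Fin n) // IsAltPerm σ}

/-- `aCount m n` is the number of permutations of `[n]` all of whose alternating runs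
have length less than `m`: among any `m − 1` consecutive indices in `{1, …, n−1}`,
at least one is an alternating descent. -/
noncomputable def aCount (m n : ℕ) : ℕ :=
  Nat.card {σ : Equiv.Perm (Fin n) //
    ∀ i, 1 ≤ i → i + m ≤ n + 1 → ∃ j ∈ Finset.Ico i (i + m - 1), IsAltDescent σ j}





open Finset

/-- sign pattern: `+1` if `k ≡ 0 (mod m)`, `-1` if `k ≡ 1 (mod m)`, `0` otherwise. -/
def eps (m k : ℕ) : ℤ := if k % m = 0 then 1 else if k % m = 1 then -1 else 0

lemma sum_eps_range (m : ℕ) (hm : 2 ≤ m) (t : ℕ) :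
    ∑ k ∈ range t, eps m k = if t % m = 1 then 1 else 0 := by
  induction t with
  | zero =>
    rw [Finset.sum_range_zero, if_neg]
    rw [Nat.zero_mod]; omega
  | succ t ih =>
    rw [Finset.sum_range_succ, ih]
    have h1 : t % m < m := Nat.mod_lt _ (by omega)
    have h2 : (t + 1) % m = (t % m + 1 % m) % m := Nat.add_mod t 1 m
    rw [Nat.mod_eq_of_lt (show 1 < m by omega)] at h2
    rcases Nat.lt_or_ge (t % m + 1) m with h | h
    · rw [Nat.mod_eq_of_lt h] at h2
      unfold eps; split_ifs <;> omega
    · have h3 : t % m + 1 = m := by omega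
      rw [h3, Nat.mod_self] at h2
      unfold eps; split_ifs <;> omega

section PerW

variable (N m : ℕ) (d : ℕ → Prop) [DecidablePred d]

/-- every window of `m-1` consecutive indices starting at `i ≥ k+1` meets `d`. -/
def Pw (k : ℕ) : Prop := ∀ i ∈ Finset.Icc (k + 1) (N + 1 - m), ∃ j ∈ Finset.Ico i (i + m - 1), d j

/-- no element of `d` in `[1, k-1]`. -/
def Qw (k : ℕ) : Prop := ∀ j ∈ Finset.Ico 1 k, ¬ d j

instance (k : ℕ) : Decidable (Pw N m d k) := by unfold Pw; infer_instance
instance (k : ℕ) : Decidable (Qw d k) := by unfold Qw; infer_instance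

lemma Pw_iff (hm : 2 ≤ m) (k : ℕ) : Pw N m d k ↔
    (∀ i, k + 1 ≤ i → i + m ≤ N + 1 → ∃ j, i ≤ j ∧ j < i + m - 1 ∧ d j) := by
  unfold Pw
  constructor
  · intro h i h1 h2
    obtain ⟨j, hj, hdj⟩ := h i (by simp [Finset.mem_Icc]; omega)
    rw [Finset.mem_Ico] at hj
    exact ⟨j, hj.1, hj.2, hdj⟩
  · intro h i hi
    rw [Finset.mem_Icc] at hi
    obtain ⟨j, hj1, hj2, hdj⟩ := h i hi.1 (by omega)
    exact ⟨j, Finset.mem_Ico.mpr ⟨hj1, hj2⟩, hdj⟩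

lemma Qw_iff (k : ℕ) : Qw d k ↔ (∀ j, 1 ≤ j → j < k → ¬ d j) := by
  unfold Qw
  constructor
  · intro h j h1 h2; exact h j (Finset.mem_Ico.mpr ⟨h1, h2⟩)
  · intro h j hj; rw [Finset.mem_Ico] at hj; exact h j hj.1 hj.2

lemma perW (hm : 2 ≤ m) :
    (∑ k ∈ range (N + 1), if Qw d k ∧ Pw N m d k then eps m k else 0)
      = if N = 0 then 1 else 0 := by
  rcases Nat.eq_zero_or_pos N with hN | hN
  · subst hN
    rw [if_pos rfl]
    rw [range_one, sum_singleton]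
    have hQ : Qw d 0 := by rw [Qw_iff]; intro j h1 h2; omega
    have hP : Pw 0 m d 0 := by rw [Pw_iff _ _ _ hm]; intro i h1 h2; omega
    rw [if_pos ⟨hQ, hP⟩]
    unfold eps
    rw [Nat.zero_mod, if_pos rfl]
  -- N ≥ 1
  rw [if_neg (by omega)]
  have hPN : Pw N m d N := by rw [Pw_iff _ _ _ hm]; intro i h1 h2; omega
  set Qfree : ℕ → Prop := fun q => ∀ j, 1 ≤ j → j ≤ q → ¬ d j with hQfree
  have hQfree0 : Qfree 0 := fun j h1 h2 => by omega
  classical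
  set q := Nat.findGreatest Qfree (N - 1) with hq
  have hqle : q ≤ N - 1 := Nat.findGreatest_le _
  have hqspec : Qfree q := Nat.findGreatest_spec (Nat.zero_le _) hQfree0
  have hQchar : ∀ k, k ≤ N → (Qw d k ↔ k ≤ q + 1) := by
    intro k hk
    rw [Qw_iff]
    constructor
    · intro hQ
      by_contra hcon
      push_neg at hcon
      have h1 : Qfree (k - 1) := by
        intro j hj1 hj2
        exact hQ j hj1 (by omega)
      exact Nat.findGreatest_is_greatest (show q < k - 1 by omega) (by omega) h1
    · intro hk1 j hj1 hj2
      exact hqspec j hj1 (by omega)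
  set a := Nat.find ⟨N, hPN⟩ with ha
  have haspec : Pw N m d a := Nat.find_spec ⟨N, hPN⟩
  have hamin : ∀ k, k < a → ¬ Pw N m d k := fun k hk => Nat.find_min _ hk
  have haN : a ≤ N := Nat.find_le hPN
  have hPchar : ∀ k, Pw N m d k ↔ a ≤ k := by
    intro k
    constructor
    · intro h; by_contra hc; exact hamin k (by omega) h
    · intro h
      rw [Pw_iff _ _ _ hm] at haspec ⊢
      intro i h1 h2; exact haspec i (by omega) h2
  have hsum : (∑ k ∈ range (N + 1), if Qw d k ∧ Pw N m d k then eps m k else 0)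
      = ∑ k ∈ Icc a (q + 1), eps m k := by
    rw [← Finset.sum_filter]
    apply Finset.sum_congr _ (fun _ _ => rfl)
    ext k
    simp only [mem_filter, mem_range, mem_Icc]
    constructor
    · rintro ⟨hk, hQ, hP⟩
      exact ⟨(hPchar k).mp hP, (hQchar k (by omega)).mp hQ⟩
    · rintro ⟨h1, h2⟩
      have hk : k < N + 1 := by omega
      exact ⟨hk, (hQchar k (by omega)).mpr h2, (hPchar k).mpr h1⟩
  rw [hsum]
  rcases Nat.lt_or_ge (q + 1) a with hlt | hge
  · rw [Finset.Icc_eq_empty (by omega), Finset.sum_empty]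
  have hIcc : ∑ k ∈ Icc a (q + 1), eps m k
      = ∑ k ∈ range (q + 1 + 1), eps m k - ∑ k ∈ range a, eps m k := by
    rw [← Finset.Ico_add_one_right_eq_Icc, Finset.sum_Ico_eq_sub _ (by omega)]
  rcases Nat.eq_zero_or_pos a with ha0 | ha1
  · -- a = 0 : q + 1 < m
    have hqm : q + 1 < m := by
      by_contra hcon
      push_neg at hcon
      have hP0 : Pw N m d 0 := by rw [hPchar]; omega
      rw [Pw_iff _ _ _ hm] at hP0
      obtain ⟨j, hj1, hj2, hj3⟩ := hP0 1 (by omega) (by omega)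
      exact hqspec j (by omega) (by omega) hj3
    rw [hIcc, ha0, Finset.range_zero, Finset.sum_empty, sub_zero, sum_eps_range m hm]
    rw [if_neg]
    have h5 : (q + 1 + 1) % m = q + 2 ∨ (q + 1 + 1) % m = 0 := by
      rcases Nat.lt_or_ge (q + 2) m with h | h
      · rw [show q+1+1 = q+2 from rfl]; exact Or.inl (Nat.mod_eq_of_lt h)
      · have h6 : q + 1 + 1 = m := by omega
        rw [h6, Nat.mod_self]; exact Or.inr rfl
    rcases h5 with h | h <;> omega
  · -- a ≥ 1 : show q + 1 = a + m - 1
    have hnPa : ¬ Pw N m d (a - 1) := hamin (a - 1) (by omega)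
    rw [Pw_iff _ _ _ hm] at hnPa haspec
    push_neg at hnPa
    obtain ⟨i, hi1, hi2, hmiss⟩ := hnPa
    have hia : i = a := by
      by_contra hcon
      obtain ⟨j, hj1, hj2, hj3⟩ := haspec i (by omega) hi2
      exact hmiss j hj1 hj2 hj3
    rw [hia] at hi2 hmiss
    clear hi1 hia
    have hup : a + m - 1 ≤ q + 1 := by
      by_contra hcon
      push_neg at hcon
      have hdq : d (q + 1) := by
        rcases Nat.lt_or_ge (q + 1) N with h | h
        · have hng : ¬ Qfree (q + 1) :=
            Nat.findGreatest_is_greatest (show q < q + 1 by omega) (by omega)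
          simp only [hQfree] at hng
          push_neg at hng
          obtain ⟨j, hj1, hj2, hj3⟩ := hng
          have : j = q + 1 := by
            by_contra hc
            exact (hqspec j hj1 (by omega)) hj3
          rwa [← this]
        · exfalso
          rcases Nat.lt_or_ge (a + m) (N + 1) with h2 | h2
          · obtain ⟨j, hj1, hj2, hj3⟩ := haspec (a + 1) (by omega) (by omega)
            exact hqspec j (by omega) (by omega) hj3
          · omega
      exact hmiss (q + 1) (by omega) (by omega) hdq
    have hdown : q + 1 ≤ a + m - 1 := by
      by_contra hcon
      push_neg at hcon
      obtain ⟨j, hj1, hj2, hj3⟩ := haspec (a + 1) (by omega) (by omega)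
      exact hqspec j (by omega) (by omega) hj3
    have hb : q + 1 = a + m - 1 := by omega
    rw [hIcc, sum_eps_range m hm, sum_eps_range m hm, hb]
    have h4 : a + m - 1 + 1 = a + m := by omega
    rw [h4, Nat.add_mod_right]
    exact sub_self _

end PerW


lemma permEnt_pos {n : ℕ} (σ : Equiv.Perm (Fin n)) {i : ℕ} (h1 : 1 ≤ i) (h2 : i ≤ n) :
    permEnt σ i = (σ ⟨i - 1, by omega⟩ : ℕ) + 1 := dif_pos ⟨h1, h2⟩

lemma isAltDescent_iff {n : ℕ} (σ : Equiv.Perm (Fin n)) {j : ℕ} (h1 : 1 ≤ j) (h2 : j < n) :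
    IsAltDescent σ j ↔
      ((j % 2 = 1 ∧ (σ ⟨j, h2⟩ : ℕ) < (σ ⟨j - 1, by omega⟩ : ℕ)) ∨
       (j % 2 = 0 ∧ (σ ⟨j - 1, by omega⟩ : ℕ) < (σ ⟨j, h2⟩ : ℕ))) := by
  unfold IsAltDescent
  rw [permEnt_pos σ h1 (by omega), permEnt_pos σ (by omega) (by omega)]
  have h3 : j + 1 - 1 = j := by omega
  simp only [h3]
  constructor
  · rintro ⟨-, -, h⟩
    rcases h with ⟨hp, hlt⟩ | ⟨hp, hlt⟩
    · exact Or.inl ⟨hp, by omega⟩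
    · exact Or.inr ⟨hp, by omega⟩
  · intro h
    refine ⟨h1, h2, ?_⟩
    rcases h with ⟨hp, hlt⟩ | ⟨hp, hlt⟩
    · exact Or.inl ⟨hp, by omega⟩
    · exact Or.inr ⟨hp, by omega⟩

/-- alternating descent with positions shifted by `kk`. -/
def ASD (kk : ℕ) {l : ℕ} (v : Equiv.Perm (Fin l)) (j : ℕ) : Prop :=
  1 ≤ j ∧ j < l ∧
    (((j + kk) % 2 = 1 ∧ permEnt v (j + 1) < permEnt v j) ∨
     ((j + kk) % 2 = 0 ∧ permEnt v j < permEnt v (j + 1)))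

instance (kk : ℕ) {l : ℕ} (v : Equiv.Perm (Fin l)) (j : ℕ) : Decidable (ASD kk v j) := by
  unfold ASD; infer_instance

lemma asd_iff (kk : ℕ) {l : ℕ} (v : Equiv.Perm (Fin l)) {j : ℕ} (h1 : 1 ≤ j) (h2 : j < l) :
    ASD kk v j ↔
      (((j + kk) % 2 = 1 ∧ (v ⟨j, h2⟩ : ℕ) < (v ⟨j - 1, by omega⟩ : ℕ)) ∨
       ((j + kk) % 2 = 0 ∧ (v ⟨j - 1, by omega⟩ : ℕ) < (v ⟨j, h2⟩ : ℕ))) := by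
  unfold ASD
  rw [permEnt_pos v h1 (by omega), permEnt_pos v (by omega) (by omega)]
  have h3 : j + 1 - 1 = j := by omega
  simp only [h3]
  constructor
  · rintro ⟨-, -, h⟩
    rcases h with ⟨hp, hlt⟩ | ⟨hp, hlt⟩
    · exact Or.inl ⟨hp, by omega⟩
    · exact Or.inr ⟨hp, by omega⟩
  · intro h
    refine ⟨h1, h2, ?_⟩
    rcases h with ⟨hp, hlt⟩ | ⟨hp, hlt⟩
    · exact Or.inl ⟨hp, by omega⟩
    · exact Or.inr ⟨hp, by omega⟩

lemma ent_ne {n : ℕ} (σ : Equiv.Perm (Fin n)) {j : ℕ} (h1 : 1 ≤ j) (h2 : j < n) :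
    ((σ ⟨j - 1, by omega⟩ : Fin n) : ℕ) ≠ ((σ ⟨j, h2⟩ : Fin n) : ℕ) := by
  intro h
  have h3 := σ.injective (Fin.ext h)
  have h4 := congrArg Fin.val h3
  simp only at h4
  omega

section Split

variable (N k : ℕ)

def embA (hk : k ≤ N) (j : Fin k) : Fin N := ⟨j, by omega⟩

def embB (j : Fin (N - k)) : Fin N := ⟨k + j, by have := j.isLt; omega⟩

lemma embA_inj (hk : k ≤ N) : Function.Injective (embA N k hk) := by
  intro a b h
  have := congrArg Fin.val h
  exact Fin.ext this

variable {N k}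

def sOf (hk : k ≤ N) (w : Equiv.Perm (Fin N)) : Finset (Fin N) :=
  image (fun j => w (embA N k hk j)) univ

lemma card_sOf (hk : k ≤ N) (w : Equiv.Perm (Fin N)) : (sOf hk w).card = k := by
  have hinj : Function.Injective (fun j => w (embA N k hk j)) :=
    fun a b h => embA_inj N k hk (w.injective h)
  rw [sOf, Finset.card_image_of_injective _ hinj, card_univ, Fintype.card_fin]

lemma card_compl_sOf (hk : k ≤ N) (w : Equiv.Perm (Fin N)) : (sOf hk w)ᶜ.card = N - k := by
  rw [Finset.card_compl, card_sOf, Fintype.card_fin]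

lemma mem_sOf (hk : k ≤ N) (w : Equiv.Perm (Fin N)) {x : Fin N} :
    x ∈ sOf hk w ↔ ∃ j : Fin k, w (embA N k hk j) = x := by
  simp [sOf]

lemma memB_compl (hk : k ≤ N) (w : Equiv.Perm (Fin N)) (j : Fin (N - k)) :
    w (embB N k j) ∈ (sOf hk w)ᶜ := by
  rw [Finset.mem_compl, mem_sOf]
  rintro ⟨j', hj'⟩
  have h2 := congrArg Fin.val (w.injective hj')
  simp only [embA, embB] at h2
  have := j'.isLt
  omega

noncomputable def uOf (hk : k ≤ N) (w : Equiv.Perm (Fin N)) : Equiv.Perm (Fin k) := by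
  refine Equiv.ofBijective
    (fun j => ((sOf hk w).orderIsoOfFin (card_sOf hk w)).symm
      ⟨w (embA N k hk j), (mem_sOf hk w).mpr ⟨j, rfl⟩⟩)
    (Finite.injective_iff_bijective.mp ?_)
  intro a b h
  have h2 := congrArg (fun x => (((sOf hk w).orderIsoOfFin (card_sOf hk w)) x : Fin N)) h
  simp only [OrderIso.apply_symm_apply] at h2
  exact embA_inj N k hk (w.injective h2)

noncomputable def vOf (hk : k ≤ N) (w : Equiv.Perm (Fin N)) : Equiv.Perm (Fin (N - k)) := by
  refine Equiv.ofBijective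
    (fun j => (((sOf hk w)ᶜ).orderIsoOfFin (card_compl_sOf hk w)).symm
      ⟨w (embB N k j), memB_compl hk w j⟩)
    (Finite.injective_iff_bijective.mp ?_)
  intro a b h
  have h2 := congrArg (fun x => ((((sOf hk w)ᶜ).orderIsoOfFin (card_compl_sOf hk w)) x : Fin N)) h
  simp only [OrderIso.apply_symm_apply] at h2
  have h3 := congrArg Fin.val (w.injective h2)
  simp only [embB] at h3
  exact Fin.ext (by omega)

lemma uOf_val (hk : k ≤ N) (w : Equiv.Perm (Fin N)) (j : Fin k) :
    (((sOf hk w).orderIsoOfFin (card_sOf hk w)) (uOf hk w j) : Fin N) = w (embA N k hk j) := by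
  simp only [uOf, Equiv.ofBijective_apply, OrderIso.apply_symm_apply]

lemma vOf_val (hk : k ≤ N) (w : Equiv.Perm (Fin N)) (j : Fin (N - k)) :
    ((((sOf hk w)ᶜ).orderIsoOfFin (card_compl_sOf hk w)) (vOf hk w j) : Fin N) = w (embB N k j) := by
  simp only [vOf, Equiv.ofBijective_apply, OrderIso.apply_symm_apply]

def asmFun (hk : k ≤ N) (s : Finset (Fin N)) (hs : s.card = k)
    (u : Equiv.Perm (Fin k)) (v : Equiv.Perm (Fin (N - k))) : Fin N → Fin N := fun i =>
  if h : (i : ℕ) < k then (s.orderIsoOfFin hs (u ⟨i, h⟩) : Fin N)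
  else ((sᶜ).orderIsoOfFin (by rw [Finset.card_compl, hs, Fintype.card_fin])
    (v ⟨(i : ℕ) - k, by have := i.isLt; omega⟩) : Fin N)

lemma asmFun_inj (hk : k ≤ N) (s : Finset (Fin N)) (hs : s.card = k)
    (u : Equiv.Perm (Fin k)) (v : Equiv.Perm (Fin (N - k))) :
    Function.Injective (asmFun hk s hs u v) := by
  intro a b heq
  unfold asmFun at heq
  by_cases ha : (a : ℕ) < k <;> by_cases hb : (b : ℕ) < k
  · rw [dif_pos ha, dif_pos hb] at heq
    have h2 := u.injective (((s.orderIsoOfFin hs).injective) (Subtype.coe_injective heq))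
    have := congrArg Fin.val h2
    exact Fin.ext this
  · rw [dif_pos ha, dif_neg hb] at heq
    exfalso
    have m2 : ((s.orderIsoOfFin hs (u ⟨(a : ℕ), ha⟩) : Fin N)) ∈ sᶜ := by
      rw [heq]; exact Finset.coe_mem _
    exact (Finset.mem_compl.mp m2) (Finset.coe_mem _)
  · rw [dif_neg ha, dif_pos hb] at heq
    exfalso
    have m2 : ((s.orderIsoOfFin hs (u ⟨(b : ℕ), hb⟩) : Fin N)) ∈ sᶜ := by
      rw [← heq]; exact Finset.coe_mem _
    exact (Finset.mem_compl.mp m2) (Finset.coe_mem _)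
  · rw [dif_neg ha, dif_neg hb] at heq
    have h2 := v.injective (((sᶜ.orderIsoOfFin _).injective) (Subtype.coe_injective heq))
    have h3 := congrArg Fin.val h2
    simp only at h3
    exact Fin.ext (by omega)

noncomputable def asm (hk : k ≤ N) (s : Finset (Fin N)) (hs : s.card = k)
    (u : Equiv.Perm (Fin k)) (v : Equiv.Perm (Fin (N - k))) : Equiv.Perm (Fin N) :=
  Equiv.ofBijective _ (Finite.injective_iff_bijective.mp (asmFun_inj hk s hs u v))

lemma asm_apply_lt (hk : k ≤ N) (s : Finset (Fin N)) (hs : s.card = k)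
    (u : Equiv.Perm (Fin k)) (v : Equiv.Perm (Fin (N - k))) (i : Fin N) (h : (i : ℕ) < k) :
    asm hk s hs u v i = (s.orderIsoOfFin hs (u ⟨i, h⟩) : Fin N) := by
  simp only [asm, Equiv.ofBijective_apply, asmFun, dif_pos h]

lemma asm_apply_ge (hk : k ≤ N) (s : Finset (Fin N)) (hs : s.card = k)
    (u : Equiv.Perm (Fin k)) (v : Equiv.Perm (Fin (N - k))) (i : Fin N) (h : ¬ (i : ℕ) < k) :
    asm hk s hs u v i = ((sᶜ).orderIsoOfFin (by rw [Finset.card_compl, hs, Fintype.card_fin])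
      (v ⟨(i : ℕ) - k, by have := i.isLt; omega⟩) : Fin N) := by
  simp only [asm, Equiv.ofBijective_apply, asmFun, dif_neg h]

lemma orderIsoOfFin_congr {α : Type*} [LinearOrder α] {s t : Finset α} {k : ℕ}
    (h : s = t) (hs : s.card = k) (ht : t.card = k) (x : Fin k) :
    (s.orderIsoOfFin hs x : α) = (t.orderIsoOfFin ht x : α) := by subst h; rfl

lemma asm_split (hk : k ≤ N) (w : Equiv.Perm (Fin N)) :
    asm hk (sOf hk w) (card_sOf hk w) (uOf hk w) (vOf hk w) = w := by
  apply Equiv.ext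
  intro i
  by_cases h : (i : ℕ) < k
  · rw [asm_apply_lt _ _ _ _ _ _ h]
    have : embA N k hk ⟨(i : ℕ), h⟩ = i := Fin.ext rfl
    rw [uOf_val hk w ⟨(i : ℕ), h⟩, this]
  · rw [asm_apply_ge _ _ _ _ _ _ h]
    have h2 : embB N k ⟨(i : ℕ) - k, by have := i.isLt; omega⟩ = i := Fin.ext (by simp [embB]; omega)
    rw [vOf_val hk w ⟨(i : ℕ) - k, _⟩, h2]

lemma sOf_asm (hk : k ≤ N) (s : Finset (Fin N)) (hs : s.card = k)
    (u : Equiv.Perm (Fin k)) (v : Equiv.Perm (Fin (N - k))) :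
    sOf hk (asm hk s hs u v) = s := by
  ext x
  rw [mem_sOf]
  constructor
  · rintro ⟨j, rfl⟩
    rw [asm_apply_lt _ _ _ _ _ _ (by simp [embA])]
    exact Finset.coe_mem _
  · intro hx
    refine ⟨u.symm ((s.orderIsoOfFin hs).symm ⟨x, hx⟩), ?_⟩
    rw [asm_apply_lt _ _ _ _ _ _ (by simp [embA])]
    have : (⟨((embA N k hk (u.symm ((s.orderIsoOfFin hs).symm ⟨x, hx⟩))) : ℕ), by simp [embA]⟩ : Fin k)
        = u.symm ((s.orderIsoOfFin hs).symm ⟨x, hx⟩) := Fin.ext rfl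
    rw [this, Equiv.apply_symm_apply, OrderIso.apply_symm_apply]

lemma uOf_asm (hk : k ≤ N) (s : Finset (Fin N)) (hs : s.card = k)
    (u : Equiv.Perm (Fin k)) (v : Equiv.Perm (Fin (N - k))) :
    uOf hk (asm hk s hs u v) = u := by
  apply Equiv.ext
  intro j
  set w := asm hk s hs u v with hw
  have h1 : (((sOf hk w).orderIsoOfFin (card_sOf hk w)) (uOf hk w j) : Fin N)
      = (((sOf hk w).orderIsoOfFin (card_sOf hk w)) (u j) : Fin N) := by
    rw [uOf_val hk w j]
    rw [orderIsoOfFin_congr (sOf_asm hk s hs u v) (card_sOf hk w) hs]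
    rw [hw, asm_apply_lt _ _ _ _ _ _ (by simp [embA])]
    have h3 : (⟨((embA N k hk j : ℕ)), by simp [embA]⟩ : Fin k) = j := Fin.ext rfl
    rw [h3]
  exact ((sOf hk w).orderIsoOfFin (card_sOf hk w)).injective (Subtype.coe_injective h1)

lemma vOf_asm (hk : k ≤ N) (s : Finset (Fin N)) (hs : s.card = k)
    (u : Equiv.Perm (Fin k)) (v : Equiv.Perm (Fin (N - k))) :
    vOf hk (asm hk s hs u v) = v := by
  apply Equiv.ext
  intro j
  set w := asm hk s hs u v with hw
  have hcs : sᶜ.card = N - k := by rw [Finset.card_compl, hs, Fintype.card_fin]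
  have h1 : ((((sOf hk w)ᶜ).orderIsoOfFin (card_compl_sOf hk w)) (vOf hk w j) : Fin N)
      = ((((sOf hk w)ᶜ).orderIsoOfFin (card_compl_sOf hk w)) (v j) : Fin N) := by
    rw [vOf_val hk w j]
    rw [orderIsoOfFin_congr (congrArg compl (sOf_asm hk s hs u v)) (card_compl_sOf hk w) hcs]
    rw [hw, asm_apply_ge _ _ _ _ _ _ (by simp [embB])]
    have h3 : (⟨((embB N k j : ℕ)) - k, by have := j.isLt; simp only [embB]; omega⟩ : Fin (N - k)) = j :=
      Fin.ext (show ((embB N k j : ℕ)) - k = (j : ℕ) by simp only [embB]; omega)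
    rw [h3]
  exact (((sOf hk w)ᶜ).orderIsoOfFin (card_compl_sOf hk w)).injective (Subtype.coe_injective h1)

lemma asm_cmpA (hk : k ≤ N) (s : Finset (Fin N)) (hs : s.card = k)
    (u : Equiv.Perm (Fin k)) (v : Equiv.Perm (Fin (N - k))) (a b : ℕ) (ha : a < k) (hb : b < k) :
    ((asm hk s hs u v ⟨a, by omega⟩ : Fin N) : ℕ) < ((asm hk s hs u v ⟨b, by omega⟩ : Fin N) : ℕ)
      ↔ ((u ⟨a, ha⟩ : ℕ) < (u ⟨b, hb⟩ : ℕ)) := by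
  rw [asm_apply_lt _ _ _ _ _ _ (show ((⟨a, by omega⟩ : Fin N) : ℕ) < k from ha),
    asm_apply_lt _ _ _ _ _ _ (show ((⟨b, by omega⟩ : Fin N) : ℕ) < k from hb)]
  have key : ∀ x y : Fin k, ((s.orderIsoOfFin hs x : Fin N) : ℕ) < ((s.orderIsoOfFin hs y : Fin N) : ℕ)
      ↔ (x : ℕ) < (y : ℕ) := by
    intro x y
    rw [Finset.coe_orderIsoOfFin_apply, Finset.coe_orderIsoOfFin_apply,
      ← Fin.lt_def, ← Fin.lt_def]
    exact OrderEmbedding.lt_iff_lt _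
  exact key _ _

lemma asm_cmpB (hk : k ≤ N) (s : Finset (Fin N)) (hs : s.card = k)
    (u : Equiv.Perm (Fin k)) (v : Equiv.Perm (Fin (N - k))) (a b : ℕ)
    (ha : k ≤ a) (ha2 : a < N) (hb : k ≤ b) (hb2 : b < N) :
    ((asm hk s hs u v ⟨a, ha2⟩ : Fin N) : ℕ) < ((asm hk s hs u v ⟨b, hb2⟩ : Fin N) : ℕ)
      ↔ ((v ⟨a - k, by omega⟩ : ℕ) < (v ⟨b - k, by omega⟩ : ℕ)) := by
  rw [asm_apply_ge _ _ _ _ _ _ (show ¬ ((⟨a, ha2⟩ : Fin N) : ℕ) < k by simp; omega),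
    asm_apply_ge _ _ _ _ _ _ (show ¬ ((⟨b, hb2⟩ : Fin N) : ℕ) < k by simp; omega)]
  have hcs : sᶜ.card = N - k := by rw [Finset.card_compl, hs, Fintype.card_fin]
  have key : ∀ x y : Fin (N - k),
      ((sᶜ.orderIsoOfFin hcs x : Fin N) : ℕ) < ((sᶜ.orderIsoOfFin hcs y : Fin N) : ℕ)
      ↔ (x : ℕ) < (y : ℕ) := by
    intro x y
    rw [Finset.coe_orderIsoOfFin_apply, Finset.coe_orderIsoOfFin_apply,
      ← Fin.lt_def, ← Fin.lt_def]
    exact OrderEmbedding.lt_iff_lt _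
  exact key _ _

lemma transferA (hk : k ≤ N) (s : Finset (Fin N)) (hs : s.card = k)
    (u : Equiv.Perm (Fin k)) (v : Equiv.Perm (Fin (N - k))) (j : ℕ) (h1 : 1 ≤ j) (h2 : j < k) :
    IsAltDescent (asm hk s hs u v) j ↔ IsAltDescent u j := by
  have hjN : j < N := by omega
  rw [isAltDescent_iff _ h1 hjN, isAltDescent_iff u h1 h2]
  have c1 := asm_cmpA hk s hs u v j (j - 1) h2 (by omega)
  have c2 := asm_cmpA hk s hs u v (j - 1) j (by omega) h2
  constructor
  · rintro (⟨hp, hlt⟩ | ⟨hp, hlt⟩)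
    · exact Or.inl ⟨hp, c1.mp hlt⟩
    · exact Or.inr ⟨hp, c2.mp hlt⟩
  · rintro (⟨hp, hlt⟩ | ⟨hp, hlt⟩)
    · exact Or.inl ⟨hp, c1.mpr hlt⟩
    · exact Or.inr ⟨hp, c2.mpr hlt⟩

lemma transferB (hk : k ≤ N) (s : Finset (Fin N)) (hs : s.card = k)
    (u : Equiv.Perm (Fin k)) (v : Equiv.Perm (Fin (N - k))) (j : ℕ) (h1 : k + 1 ≤ j) (h2 : j < N) :
    IsAltDescent (asm hk s hs u v) j ↔ ASD k v (j - k) := by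
  have hjl : j - k < N - k := by omega
  have h1' : 1 ≤ j - k := by omega
  rw [isAltDescent_iff _ (show 1 ≤ j by omega) h2, asd_iff k v h1' hjl]
  have c1 := asm_cmpB hk s hs u v j (j - 1) (by omega) h2 (by omega) (by omega)
  have c2 := asm_cmpB hk s hs u v (j - 1) j (by omega) (by omega) (by omega) h2
  have hv : (⟨j - 1 - k, by omega⟩ : Fin (N - k)) = ⟨j - k - 1, by omega⟩ :=
    Fin.ext (show j - 1 - k = j - k - 1 by omega)
  rw [hv] at c1 c2
  have hpar : (j - k + k) % 2 = j % 2 := by omega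
  rw [hpar]
  constructor
  · rintro (⟨hp, hlt⟩ | ⟨hp, hlt⟩)
    · exact Or.inl ⟨hp, c1.mp hlt⟩
    · exact Or.inr ⟨hp, c2.mp hlt⟩
  · rintro (⟨hp, hlt⟩ | ⟨hp, hlt⟩)
    · exact Or.inl ⟨hp, c1.mpr hlt⟩
    · exact Or.inr ⟨hp, c2.mpr hlt⟩

/-- `u` has no alternating descents. -/
def Apred (k : ℕ) (u : Equiv.Perm (Fin k)) : Prop := ∀ j ∈ Finset.Ico 1 k, ¬ IsAltDescent u j

/-- every window of `m-1` indices meets the shifted alternating descent set of `v`. -/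
def Bpred (m kk l : ℕ) (v : Equiv.Perm (Fin l)) : Prop :=
  ∀ i ∈ Finset.Icc 1 (l + 1 - m), ∃ j ∈ Finset.Ico i (i + m - 1), ASD kk v j

instance (k : ℕ) (u : Equiv.Perm (Fin k)) : Decidable (Apred k u) := by
  unfold Apred; infer_instance

instance (m kk l : ℕ) (v : Equiv.Perm (Fin l)) : Decidable (Bpred m kk l v) := by
  unfold Bpred; infer_instance

lemma Qw_asm (hk : k ≤ N) (s : Finset (Fin N)) (hs : s.card = k)
    (u : Equiv.Perm (Fin k)) (v : Equiv.Perm (Fin (N - k))) :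
    Qw (IsAltDescent (asm hk s hs u v)) k ↔ Apred k u := by
  unfold Qw Apred
  constructor
  · intro h j hj
    have hj' := Finset.mem_Ico.mp hj
    exact fun hd => h j hj ((transferA hk s hs u v j hj'.1 hj'.2).mpr hd)
  · intro h j hj
    have hj' := Finset.mem_Ico.mp hj
    exact fun hd => h j hj ((transferA hk s hs u v j hj'.1 hj'.2).mp hd)

lemma Pw_asm (m : ℕ) (hm : 2 ≤ m) (hk : k ≤ N) (s : Finset (Fin N)) (hs : s.card = k)
    (u : Equiv.Perm (Fin k)) (v : Equiv.Perm (Fin (N - k))) :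
    Pw N m (IsAltDescent (asm hk s hs u v)) k ↔ Bpred m k (N - k) v := by
  unfold Pw Bpred
  constructor
  · intro h i hi
    rw [Finset.mem_Icc] at hi
    obtain ⟨j, hj, hd⟩ := h (i + k) (by rw [Finset.mem_Icc]; omega)
    rw [Finset.mem_Ico] at hj
    refine ⟨j - k, by rw [Finset.mem_Ico]; omega, ?_⟩
    exact (transferB hk s hs u v j (by omega) (by omega)).mp hd
  · intro h i hi
    rw [Finset.mem_Icc] at hi
    obtain ⟨j', hj', hd⟩ := h (i - k) (by rw [Finset.mem_Icc]; omega)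
    rw [Finset.mem_Ico] at hj'
    refine ⟨j' + k, by rw [Finset.mem_Ico]; omega, ?_⟩
    refine (transferB hk s hs u v (j' + k) (by omega) (by omega)).mpr ?_
    rw [Nat.add_sub_cancel]
    exact hd

end Split

section Complement

variable {l : ℕ}

/-- compose with the order-reversing permutation: complement all values. -/
def compPerm (σ : Equiv.Perm (Fin l)) : Equiv.Perm (Fin l) := σ.trans (Fin.revPerm)

lemma compPerm_apply (σ : Equiv.Perm (Fin l)) (x : Fin l) : compPerm σ x = (σ x).rev := rfl

lemma compPerm_comp (σ : Equiv.Perm (Fin l)) : compPerm (compPerm σ) = σ := by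
  apply Equiv.ext
  intro x
  simp [compPerm_apply, Fin.rev_rev]

lemma permEnt_comp (σ : Equiv.Perm (Fin l)) {i : ℕ} (h1 : 1 ≤ i) (h2 : i ≤ l) :
    permEnt (compPerm σ) i = l + 1 - permEnt σ i := by
  rw [permEnt_pos (compPerm σ) h1 h2, permEnt_pos σ h1 h2]
  rw [compPerm_apply]
  rw [Fin.val_rev]
  have := (σ ⟨i - 1, by omega⟩).isLt
  omega

lemma permEnt_bounds (σ : Equiv.Perm (Fin l)) {i : ℕ} (h1 : 1 ≤ i) (h2 : i ≤ l) :
    1 ≤ permEnt σ i ∧ permEnt σ i ≤ l := by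
  rw [permEnt_pos σ h1 h2]
  have := (σ ⟨i - 1, by omega⟩).isLt
  omega

lemma permEnt_ne (σ : Equiv.Perm (Fin l)) {j : ℕ} (h1 : 1 ≤ j) (h2 : j < l) :
    permEnt σ j ≠ permEnt σ (j + 1) := by
  rw [permEnt_pos σ h1 (by omega), permEnt_pos σ (by omega) (by omega)]
  have h3 : j + 1 - 1 = j := by omega
  intro hcon
  have h5 : ((σ ⟨j - 1, by omega⟩ : Fin l) : ℕ) = ((σ ⟨j + 1 - 1, by omega⟩ : Fin l) : ℕ) := by omega
  have h6 := σ.injective (Fin.ext h5)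
  have h7 := congrArg Fin.val h6
  simp only at h7
  omega

lemma IAD_comp (σ : Equiv.Perm (Fin l)) (j : ℕ) (h1 : 1 ≤ j) (h2 : j < l) :
    IsAltDescent (compPerm σ) j ↔ ¬ IsAltDescent σ j := by
  unfold IsAltDescent
  rw [permEnt_comp σ h1 (by omega), permEnt_comp σ (by omega) (by omega)]
  have hb1 := permEnt_bounds σ h1 (show j ≤ l by omega)
  have hb2 := permEnt_bounds σ (show 1 ≤ j + 1 by omega) (show j + 1 ≤ l by omega)
  have hne := permEnt_ne σ h1 h2
  constructor
  · rintro ⟨-, -, h⟩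
    intro hcon
    rcases hcon with ⟨-, -, hc⟩
    omega
  · intro h
    refine ⟨h1, h2, ?_⟩
    by_contra hcon
    apply h
    refine ⟨h1, h2, ?_⟩
    omega

lemma ASD_even (kk : ℕ) (hkk : kk % 2 = 0) (σ : Equiv.Perm (Fin l)) (j : ℕ) :
    ASD kk σ j ↔ IsAltDescent σ j := by
  unfold ASD IsAltDescent
  have hpar : (j + kk) % 2 = j % 2 := by omega
  rw [hpar]

lemma ASD_odd_comp (kk : ℕ) (hkk : kk % 2 = 1) (σ : Equiv.Perm (Fin l)) (j : ℕ) :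
    ASD kk (compPerm σ) j ↔ IsAltDescent σ j := by
  rcases Nat.lt_or_ge j 1 with h1 | h1
  · constructor
    · rintro ⟨ha, -, -⟩; omega
    · rintro ⟨ha, -, -⟩; omega
  rcases Nat.lt_or_ge j l with h2 | h2
  · unfold ASD IsAltDescent
    rw [permEnt_comp σ h1 (by omega), permEnt_comp σ (by omega) (by omega)]
    have hb1 := permEnt_bounds σ h1 (show j ≤ l by omega)
    have hb2 := permEnt_bounds σ (show 1 ≤ j + 1 by omega) (show j + 1 ≤ l by omega)
    have hne := permEnt_ne σ h1 h2
    have hpar : (j + kk) % 2 = (j + 1) % 2 := by omega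
    constructor
    · rintro ⟨-, -, h⟩
      refine ⟨h1, h2, ?_⟩
      omega
    · rintro ⟨-, -, h⟩
      refine ⟨h1, h2, ?_⟩
      omega
  · constructor
    · rintro ⟨-, hb, -⟩; omega
    · rintro ⟨-, hb, -⟩; omega

lemma card_comp (p q : Equiv.Perm (Fin l) → Prop) [DecidablePred p] [DecidablePred q]
    (h : ∀ σ, p (compPerm σ) ↔ q σ) :
    (Finset.univ.filter p).card = (Finset.univ.filter q).card := by
  apply Finset.card_bij' (fun σ _ => compPerm σ) (fun σ _ => compPerm σ)
  · intro σ hσ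
    rw [Finset.mem_filter] at hσ ⊢
    refine ⟨Finset.mem_univ _, ?_⟩
    have := h (compPerm σ)
    rw [compPerm_comp] at this
    exact this.mp hσ.2
  · intro σ hσ
    rw [Finset.mem_filter] at hσ ⊢
    exact ⟨Finset.mem_univ _, (h σ).mpr hσ.2⟩
  · intro σ _
    exact compPerm_comp σ
  · intro σ _
    exact compPerm_comp σ

end Complement


section Counting

open Finset

lemma isAltPerm_iff {k : ℕ} (σ : Equiv.Perm (Fin k)) :
    IsAltPerm σ ↔ ∀ j ∈ Finset.Ico 1 k, IsAltDescent σ j := by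
  unfold IsAltPerm IsAltDescent
  constructor
  · intro h j hj
    rw [Finset.mem_Ico] at hj
    obtain ⟨ha, hb⟩ := h j hj.1 hj.2
    refine ⟨hj.1, hj.2, ?_⟩
    rcases Nat.lt_or_ge (j % 2) 1 with hp | hp
    · exact Or.inr ⟨by omega, hb (by omega)⟩
    · exact Or.inl ⟨by omega, ha (by omega)⟩
  · intro h i h1 h2
    obtain ⟨-, -, hd⟩ := h i (Finset.mem_Ico.mpr ⟨h1, h2⟩)
    constructor
    · intro hp
      rcases hd with ⟨-, hlt⟩ | ⟨hq, -⟩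
      · exact hlt
      · omega
    · intro hp
      rcases hd with ⟨hq, -⟩ | ⟨-, hlt⟩
      · omega
      · exact hlt

lemma nat_card_filter {α : Type*} [Fintype α] [DecidableEq α] (p q : α → Prop) [DecidablePred q]
    (h : ∀ x, p x ↔ q x) : Nat.card {x // p x} = (Finset.univ.filter q).card := by
  rw [Nat.card_congr (Equiv.subtypeEquivRight h), Nat.card_eq_fintype_card,
    Fintype.card_subtype]

lemma count_A (k : ℕ) : (Finset.univ.filter (Apred k)).card = eulerNum k := by
  rw [eulerNum, nat_card_filter _ (fun σ => ∀ j ∈ Finset.Ico 1 k, IsAltDescent σ j)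
    (fun σ => isAltPerm_iff σ)]
  apply card_comp
  intro σ
  unfold Apred
  constructor
  · intro h j hj
    have hj' := Finset.mem_Ico.mp hj
    have := h j hj
    rw [IAD_comp σ j hj'.1 hj'.2] at this
    exact not_not.mp this
  · intro h j hj
    have hj' := Finset.mem_Ico.mp hj
    rw [IAD_comp σ j hj'.1 hj'.2]
    exact not_not.mpr (h j hj)

lemma acount_pred_iff (m l : ℕ) (hm : 2 ≤ m) (σ : Equiv.Perm (Fin l)) :
    (∀ i, 1 ≤ i → i + m ≤ l + 1 → ∃ j ∈ Finset.Ico i (i + m - 1), IsAltDescent σ j)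
      ↔ ∀ i ∈ Finset.Icc 1 (l + 1 - m), ∃ j ∈ Finset.Ico i (i + m - 1), IsAltDescent σ j := by
  constructor
  · intro h i hi
    rw [Finset.mem_Icc] at hi
    exact h i hi.1 (by omega)
  · intro h i h1 h2
    exact h i (by rw [Finset.mem_Icc]; omega)

lemma count_B (m kk l : ℕ) (hm : 2 ≤ m) :
    (Finset.univ.filter (Bpred m kk l)).card = aCount m l := by
  rw [aCount, nat_card_filter _
    (fun σ => ∀ i ∈ Finset.Icc 1 (l + 1 - m), ∃ j ∈ Finset.Ico i (i + m - 1), IsAltDescent σ j)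
    (fun σ => acount_pred_iff m l hm σ)]
  rcases Nat.even_or_odd kk with he | ho
  · have hkk : kk % 2 = 0 := Nat.even_iff.mp he
    refine congrArg Finset.card (Finset.filter_congr ?_)
    intro σ _
    unfold Bpred
    constructor
    · intro h i hi
      obtain ⟨j, hj, hd⟩ := h i hi
      exact ⟨j, hj, (ASD_even kk hkk σ j).mp hd⟩
    · intro h i hi
      obtain ⟨j, hj, hd⟩ := h i hi
      exact ⟨j, hj, (ASD_even kk hkk σ j).mpr hd⟩
  · have hkk : kk % 2 = 1 := Nat.odd_iff.mp ho
    apply card_comp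
    intro σ
    unfold Bpred
    have key : ∀ j, ASD kk (compPerm σ) j ↔ IsAltDescent σ j :=
      fun j => ASD_odd_comp kk hkk σ j
    constructor
    · intro h i hi
      obtain ⟨j, hj, hd⟩ := h i hi
      exact ⟨j, hj, (key j).mp hd⟩
    · intro h i hi
      obtain ⟨j, hj, hd⟩ := h i hi
      exact ⟨j, hj, (key j).mpr hd⟩

lemma count_choose (N k : ℕ) :
    (Finset.univ.filter (fun s : Finset (Fin N) => s.card = k)).card = N.choose k := by
  rw [← Fintype.card_subtype, Fintype.card_finset_len, Fintype.card_fin]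

lemma key_count (m N k : ℕ) (hm : 2 ≤ m) (hk : k ≤ N) :
    (Finset.univ.filter (fun w : Equiv.Perm (Fin N) =>
        Qw (IsAltDescent w) k ∧ Pw N m (IsAltDescent w) k)).card
      = N.choose k * (eulerNum k * aCount m (N - k)) := by
  rw [← count_choose N k, ← count_A k, ← count_B m k (N - k) hm,
    ← Finset.card_product, ← Finset.card_product]
  refine Finset.card_bij' (fun w _ => (sOf hk w, (uOf hk w, vOf hk w)))
    (fun t ht => asm hk t.1 (Finset.mem_filter.mp (Finset.mem_product.mp ht).1).2 t.2.1 t.2.2)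
    ?hi ?hj ?left ?right
  case hi =>
    intro w hw
    rw [Finset.mem_filter] at hw
    obtain ⟨-, hQ, hP⟩ := hw
    have e := asm_split hk w
    rw [Finset.mem_product, Finset.mem_product, Finset.mem_filter, Finset.mem_filter,
      Finset.mem_filter]
    refine ⟨⟨Finset.mem_univ _, card_sOf hk w⟩,
      ⟨Finset.mem_univ _, ?_⟩, ⟨Finset.mem_univ _, ?_⟩⟩
    · show Apred k (uOf hk w)
      refine (Qw_asm hk (sOf hk w) (card_sOf hk w) (uOf hk w) (vOf hk w)).mp ?_
      rw [e]; exact hQ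
    · show Bpred m k (N - k) (vOf hk w)
      refine (Pw_asm m hm hk (sOf hk w) (card_sOf hk w) (uOf hk w) (vOf hk w)).mp ?_
      rw [e]; exact hP
  case hj =>
    intro t ht
    have ht' := ht
    rw [Finset.mem_product, Finset.mem_product, Finset.mem_filter, Finset.mem_filter,
      Finset.mem_filter] at ht'
    rw [Finset.mem_filter]
    refine ⟨Finset.mem_univ _, ?_, ?_⟩
    · exact (Qw_asm hk _ _ _ _).mpr ht'.2.1.2
    · exact (Pw_asm m hm hk _ _ _ _).mpr ht'.2.2.2
  case left =>
    intro w _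
    exact asm_split hk w
  case right =>
    intro t ht
    have h1 := sOf_asm hk t.1 (Finset.mem_filter.mp (Finset.mem_product.mp ht).1).2 t.2.1 t.2.2
    have h2 := uOf_asm hk t.1 (Finset.mem_filter.mp (Finset.mem_product.mp ht).1).2 t.2.1 t.2.2
    have h3 := vOf_asm hk t.1 (Finset.mem_filter.mp (Finset.mem_product.mp ht).1).2 t.2.1 t.2.2
    exact Prod.ext h1 (Prod.ext h2 h3)

end Counting

lemma master (m : ℕ) (hm : 2 ≤ m) (N : ℕ) :
    ∑ k ∈ Finset.range (N + 1),
      eps m k * ((N.choose k * (eulerNum k * aCount m (N - k)) : ℕ) : ℤ)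
    = if N = 0 then 1 else 0 := by
  have step : ∀ k ∈ Finset.range (N + 1),
      eps m k * ((N.choose k * (eulerNum k * aCount m (N - k)) : ℕ) : ℤ)
      = ∑ w : Equiv.Perm (Fin N),
          (if Qw (IsAltDescent w) k ∧ Pw N m (IsAltDescent w) k then eps m k else 0) := by
    intro k hk
    rw [Finset.mem_range] at hk
    rw [← key_count m N k hm (by omega)]
    rw [Finset.card_filter]
    push_cast
    rw [Finset.mul_sum]
    apply Finset.sum_congr rfl
    intro w _
    rw [mul_ite, mul_one, mul_zero]
  rw [Finset.sum_congr rfl step]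
  rw [Finset.sum_comm]
  have hper : ∀ w : Equiv.Perm (Fin N),
      (∑ k ∈ Finset.range (N + 1), if Qw (IsAltDescent w) k ∧ Pw N m (IsAltDescent w) k
        then eps m k else 0) = if N = 0 then 1 else 0 :=
    fun w => perW N m (IsAltDescent w) hm
  rw [Finset.sum_congr rfl (fun w _ => hper w), Finset.sum_const]
  rcases Nat.eq_zero_or_pos N with h | h
  · subst h
    rw [if_pos rfl]
    simp
  · rw [if_neg (by omega)]
    simp


/-- for `m ≥ 2`, in `ℚ⟦X⟧`, letting `Aₘ` have coefficient of `Xⁿ` equal to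
`Eₙ/n!` if `n ≡ 0 (mod m)`, `−Eₙ/n!` if `n ≡ 1 (mod m)`, and `0` otherwise, we have
`Aₘ · Σₙ aₘ(n)·Xⁿ/n! = 1`. -/
theorem statement8 (m : ℕ) (hm : 2 ≤ m) :
    (PowerSeries.mk (fun n : ℕ =>
        if n % m = 0 then (eulerNum n : ℚ) / n.factorial
        else if n % m = 1 then -((eulerNum n : ℚ) / n.factorial)
        else 0)) *
      (PowerSeries.mk (fun n : ℕ => (aCount m n : ℚ) / n.factorial)) = 1 := by
  apply PowerSeries.ext
  intro N
  rw [PowerSeries.coeff_mul, Finset.Nat.sum_antidiagonal_eq_sum_range_succ_mk]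
  simp only [PowerSeries.coeff_mk]
  rw [PowerSeries.coeff_one]
  have step : ∀ k ∈ Finset.range (N + 1),
      (if k % m = 0 then (eulerNum k : ℚ) / k.factorial
        else if k % m = 1 then -((eulerNum k : ℚ) / k.factorial) else 0)
        * ((aCount m (N - k) : ℚ) / (N - k).factorial)
      = (N.factorial : ℚ)⁻¹ *
          (((eps m k * ((N.choose k * (eulerNum k * aCount m (N - k)) : ℕ) : ℤ)) : ℤ) : ℚ) := by
    intro k hk
    rw [Finset.mem_range] at hk
    have hc : (N.choose k : ℚ) = (N.factorial : ℚ) / (k.factorial * (N - k).factorial) :=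
      Nat.cast_choose ℚ (show k ≤ N by omega)
    have hf1 : (k.factorial : ℚ) ≠ 0 := Nat.cast_ne_zero.mpr k.factorial_ne_zero
    have hf2 : ((N - k).factorial : ℚ) ≠ 0 := Nat.cast_ne_zero.mpr (N - k).factorial_ne_zero
    have hf3 : (N.factorial : ℚ) ≠ 0 := Nat.cast_ne_zero.mpr N.factorial_ne_zero
    unfold eps
    split_ifs with h1 h2
    · push_cast
      rw [hc]
      field_simp
      try ring
    · push_cast
      rw [hc]
      field_simp
      try ring
    · push_cast
      simp
  rw [Finset.sum_congr rfl step, ← Finset.mul_sum]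
  have hsum : (∑ k ∈ Finset.range (N + 1),
      (((eps m k * ((N.choose k * (eulerNum k * aCount m (N - k)) : ℕ) : ℤ)) : ℤ) : ℚ))
      = (((if N = 0 then 1 else 0 : ℤ)) : ℚ) := by
    rw [← Int.cast_sum, master m hm N]
  rw [hsum]
  split_ifs with h
  · subst h
    norm_num
  · norm_num
end

section
/- Let L = (L₁,…,L_k) be a composition of n (a sequence of positive integers with L₁+⋯+L_k = n) and let D(L) = {L₁, L₁+L₂, …, L₁+⋯+L_{k−1}} ⊆ {1,…,n−1}. Then the number of permutations of [n] whose set of alternating descents is contained in D(L) equals (n!/(L₁!·⋯·L_k!))·E_{L₁}·E_{L₂}·⋯·E_{L_k}. -/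
namespace Stmt11

variable {n k : ℕ}

def off (L : Fin k → ℕ) (i : ℕ) : ℕ :=
  ∑ j ∈ Finset.univ.filter (fun j : Fin k => (j : ℕ) < i), L j

variable (L : Fin k → ℕ)

lemma off_succ {i : ℕ} (hi : i < k) : off L (i + 1) = off L i + L ⟨i, hi⟩ := by
  unfold off
  have h : (Finset.univ.filter fun j : Fin k => (j : ℕ) < i + 1)
      = insert ⟨i, hi⟩ (Finset.univ.filter fun j : Fin k => (j : ℕ) < i) := by
    ext j
    simp only [Finset.mem_filter, Finset.mem_univ, true_and, Finset.mem_insert, Fin.ext_iff]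
    omega
  rw [h, Finset.sum_insert (by simp)]
  ring

lemma off_mono : Monotone (off L) := fun a b hab =>
  Finset.sum_le_sum_of_subset (by
    intro j hj
    simp only [Finset.mem_filter, Finset.mem_univ, true_and] at *
    omega)

lemma off_k (hsum : ∑ i, L i = n) : off L k = n := by
  rw [← hsum]; unfold off
  congr 1
  ext j; simp [j.isLt]

lemma off_strict (hpos : ∀ i, 0 < L i) {a b : ℕ} (hab : a < b) (hb : b ≤ k) :
    off L a < off L b := by
  have ha : a < k := lt_of_lt_of_le hab hb
  have h1 := off_succ L ha
  have h2 := hpos ⟨a, ha⟩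
  have h3 := off_mono L (show a + 1 ≤ b from hab)
  omega

noncomputable def posEquiv (hsum : ∑ i, L i = n) : (Σ i : Fin k, Fin (L i)) ≃ Fin n :=
  Equiv.ofBijective
    (fun x => ⟨off L x.1 + x.2, by
      have h1 : (x.2 : ℕ) < L x.1 := x.2.isLt
      have h2 := off_succ L x.1.isLt
      have h3 := off_mono L (show (x.1 : ℕ) + 1 ≤ k from x.1.isLt)
      have h4 := off_k L hsum
      simp only [Fin.eta] at h2
      omega⟩)
    (by
      rw [Fintype.bijective_iff_injective_and_card]
      constructor
      · rintro ⟨i, j⟩ ⟨i', j'⟩ h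
        simp only [Fin.mk.injEq] at h
        have hii' : i = i' := by
          by_contra hne
          rcases lt_or_gt_of_ne (fun hv : (i : ℕ) = (i' : ℕ) => hne (Fin.ext hv)) with hlt | hlt
          · have h2 := off_succ L i.isLt
            simp only [Fin.eta] at h2
            have h3 := off_mono L (show (i : ℕ) + 1 ≤ (i' : ℕ) from hlt)
            have := j.isLt; have := j'.isLt; omega
          · have h2 := off_succ L i'.isLt
            simp only [Fin.eta] at h2
            have h3 := off_mono L (show (i' : ℕ) + 1 ≤ (i : ℕ) from hlt)
            have := j.isLt; have := j'.isLt; omega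
        subst hii'
        have : (j : ℕ) = (j' : ℕ) := by omega
        exact congrArg (Sigma.mk i) (Fin.ext this)
      · simp [Fintype.card_sigma, hsum])

lemma posEquiv_apply (hsum : ∑ i, L i = n) (i : Fin k) (j : Fin (L i)) :
    ((posEquiv L hsum ⟨i, j⟩ : Fin n) : ℕ) = off L (i : ℕ) + (j : ℕ) := rfl

lemma posEquiv_symm (hsum : ∑ i, L i = n) (i : Fin k) (j : Fin (L i)) {h} :
    (posEquiv L hsum).symm ⟨off L (i : ℕ) + (j : ℕ), h⟩ = ⟨i, j⟩ := by
  rw [Equiv.symm_apply_eq]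
  exact Fin.ext (posEquiv_apply L hsum i j).symm


/-! ### Block machinery -/

variable {L}

def blockSet (e : (Σ i : Fin k, Fin (L i)) ≃ Fin n) (i : Fin k) : Finset (Fin n) :=
  Finset.univ.image (fun j : Fin (L i) => e ⟨i, j⟩)

lemma blockFun_inj (e : (Σ i : Fin k, Fin (L i)) ≃ Fin n) (i : Fin k) :
    Function.Injective (fun j : Fin (L i) => e ⟨i, j⟩) := fun a b h => by
  have h2 := e.injective h
  exact eq_of_heq (Sigma.mk.inj_iff.mp h2).2

lemma card_blockSet (e : (Σ i : Fin k, Fin (L i)) ≃ Fin n) (i : Fin k) :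
    (blockSet e i).card = L i := by
  rw [blockSet, Finset.card_image_of_injective _ (blockFun_inj e i), Finset.card_univ,
    Fintype.card_fin]

noncomputable def monoIso (e : (Σ i : Fin k, Fin (L i)) ≃ Fin n) (i : Fin k) :
    Fin (L i) ≃o (blockSet e i) :=
  (blockSet e i).orderIsoOfFin (card_blockSet e i)

noncomputable def blockEquiv (e : (Σ i : Fin k, Fin (L i)) ≃ Fin n) (i : Fin k) :
    Fin (L i) ≃ (blockSet e i) :=
  Equiv.ofBijective (fun j => ⟨e ⟨i, j⟩, Finset.mem_image_of_mem _ (Finset.mem_univ j)⟩)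
    (by
      rw [Fintype.bijective_iff_injective_and_card]
      refine ⟨fun a b h => blockFun_inj e i (congrArg Subtype.val h), ?_⟩
      simp [Fintype.card_coe, card_blockSet])

noncomputable def patt (e : (Σ i : Fin k, Fin (L i)) ≃ Fin n) (i : Fin k) :
    Equiv.Perm (Fin (L i)) :=
  (blockEquiv e i).trans (monoIso e i).toEquiv.symm

lemma monoIso_patt (e : (Σ i : Fin k, Fin (L i)) ≃ Fin n) (i : Fin k) (j : Fin (L i)) :
    ((monoIso e i (patt e i j) : Fin n)) = e ⟨i, j⟩ := by
  simp only [patt, Equiv.trans_apply]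
  rw [show (monoIso e i) ((monoIso e i).toEquiv.symm (blockEquiv e i j))
      = blockEquiv e i j from (monoIso e i).apply_symm_apply _]
  rfl

lemma patt_lt_iff (e : (Σ i : Fin k, Fin (L i)) ≃ Fin n) (i : Fin k) (j j' : Fin (L i)) :
    patt e i j < patt e i j' ↔ e ⟨i, j⟩ < e ⟨i, j'⟩ := by
  rw [← (monoIso e i).lt_iff_lt, ← Subtype.coe_lt_coe, monoIso_patt, monoIso_patt]


/-! ### The grand decomposition -/

lemma orderIsoOfFin_congr {α : Type*} [LinearOrder α] {S T : Finset α} (h : S = T) {m : ℕ}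
    (hS : S.card = m) (hT : T.card = m) (x : Fin m) :
    ((S.orderIsoOfFin hS x : α)) = (T.orderIsoOfFin hT x : α) := by
  subst h; rfl

lemma monoIso_congr (e e' : (Σ i : Fin k, Fin (L i)) ≃ Fin n) (i : Fin k)
    (h : blockSet e i = blockSet e' i) (x : Fin (L i)) :
    ((monoIso e i x : Fin n)) = (monoIso e' i x : Fin n) :=
  orderIsoOfFin_congr h _ _ x

variable (L) in
noncomputable def Phi :
    ((Σ i : Fin k, Fin (L i)) ≃ Fin n) →
      {S : Fin k → Finset (Fin n) // ∃ e : (Σ i : Fin k, Fin (L i)) ≃ Fin n, blockSet e = S} ×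
        ∀ i, Equiv.Perm (Fin (L i)) :=
  fun e => (⟨blockSet e, e, rfl⟩, patt e)

lemma Phi_bijective : Function.Bijective (Phi (n := n) L) := by
  constructor
  · intro e e' h
    have h1 : blockSet e = blockSet e' := congrArg (fun x => (x.1 : Fin k → Finset (Fin n))) h
    have h2 : patt e = patt e' := congrArg Prod.snd h
    apply Equiv.ext
    rintro ⟨i, j⟩
    have a1 := monoIso_patt e i j
    have a2 := monoIso_patt e' i j
    have a3 := monoIso_congr e e' i (congrFun h1 i) (patt e i j)
    rw [h2] at a1 a3
    exact a1.symm.trans (a3.trans a2)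
  · rintro ⟨⟨S, e₀, hS⟩, p⟩
    classical
    set q : ∀ i, Equiv.Perm (Fin (L i)) := fun i => (p i).trans (patt e₀ i).symm with hq
    refine ⟨(Equiv.sigmaCongrRight q).trans e₀, ?_⟩
    set e : (Σ i : Fin k, Fin (L i)) ≃ Fin n := (Equiv.sigmaCongrRight q).trans e₀ with he
    have heval : ∀ (i : Fin k) (j : Fin (L i)), e ⟨i, j⟩ = e₀ ⟨i, q i j⟩ := fun i j => rfl
    have hbs : blockSet e = blockSet e₀ := by
      funext i
      unfold blockSet
      ext x
      simp only [Finset.mem_image, Finset.mem_univ, true_and, heval]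
      constructor
      · rintro ⟨j, rfl⟩; exact ⟨q i j, rfl⟩
      · rintro ⟨j, rfl⟩; exact ⟨(q i).symm j, by rw [Equiv.apply_symm_apply]⟩
    have hpatt : ∀ i, patt e i = p i := by
      intro i
      apply Equiv.ext
      intro j
      have k1 := monoIso_patt e i j
      have k2 := monoIso_patt e₀ i (q i j)
      have k3 := monoIso_congr e e₀ i (congrFun hbs i) (patt e i j)
      have k4 : (monoIso e₀ i (patt e i j) : Fin n) = (monoIso e₀ i (patt e₀ i (q i j)) : Fin n) := by
        rw [← k3, k1, k2, heval]
      have k5 : patt e i j = patt e₀ i (q i j) :=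
        (monoIso e₀ i).injective (Subtype.ext k4)
      rw [k5, hq]
      simp
    unfold Phi
    refine Prod.ext (Subtype.ext ?_) (funext hpatt)
    exact hbs.trans hS

variable (L) in
noncomputable def PhiEquiv :
    ((Σ i : Fin k, Fin (L i)) ≃ Fin n) ≃
      ({S : Fin k → Finset (Fin n) // ∃ e : (Σ i : Fin k, Fin (L i)) ≃ Fin n, blockSet e = S} ×
        ∀ i, Equiv.Perm (Fin (L i))) :=
  Equiv.ofBijective (Phi L) Phi_bijective


/-! ### Pattern conditions and their counts -/

def PattCond (s m : ℕ) (q : Equiv.Perm (Fin m)) : Prop :=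
  ∀ j, (hj : j + 1 < m) →
    ((s + j + 1) % 2 = 1 → q ⟨j, by omega⟩ < q ⟨j + 1, hj⟩) ∧
    ((s + j + 1) % 2 = 0 → q ⟨j + 1, hj⟩ < q ⟨j, by omega⟩)

lemma permEnt_eval {m : ℕ} (τ : Equiv.Perm (Fin m)) {i : ℕ} (h1 : 1 ≤ i) (h2 : i ≤ m) :
    permEnt τ i = (τ ⟨i - 1, by omega⟩ : ℕ) + 1 := dif_pos ⟨h1, h2⟩

lemma isAltPerm_iff {m : ℕ} (τ : Equiv.Perm (Fin m)) :
    IsAltPerm τ ↔ ∀ j, (hj : j + 1 < m) →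
      ((j + 1) % 2 = 1 → τ ⟨j + 1, hj⟩ < τ ⟨j, by omega⟩) ∧
      ((j + 1) % 2 = 0 → τ ⟨j, by omega⟩ < τ ⟨j + 1, hj⟩) := by
  constructor
  · intro h j hj
    obtain ⟨h1, h2⟩ := h (j + 1) (by omega) hj
    rw [permEnt_eval τ (by omega) (by omega), permEnt_eval τ (by omega) (by omega)] at h1 h2
    simp only [Nat.add_sub_cancel] at h1 h2
    constructor
    · intro hp
      have := h1 hp
      rw [Fin.lt_def]
      omega
    · intro hp
      have := h2 hp
      rw [Fin.lt_def]
      omega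
  · intro h i h1 h2
    obtain ⟨g1, g2⟩ := h (i - 1) (by omega)
    rw [permEnt_eval τ (by omega) (by omega), permEnt_eval τ (by omega) (by omega)]
    simp only [Nat.add_sub_cancel]
    have hi : i - 1 + 1 = i := by omega
    constructor
    · intro hp
      have := g1 (by omega)
      rw [Fin.lt_def] at this
      simp only [hi] at this ⊢
      omega
    · intro hp
      have := g2 (by omega)
      rw [Fin.lt_def] at this
      simp only [hi] at this ⊢
      omega

noncomputable def revCompEquiv (m : ℕ) : Equiv.Perm (Fin m) ≃ Equiv.Perm (Fin m) where
  toFun q := q.trans Fin.revPerm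
  invFun q := q.trans Fin.revPerm
  left_inv q := by ext x; simp
  right_inv q := by ext x; simp

lemma pattCond_card (s m : ℕ) :
    Nat.card {q : Equiv.Perm (Fin m) // PattCond s m q} = eulerNum m := by
  rcases Nat.mod_two_eq_zero_or_one s with hs | hs
  · rw [eulerNum]
    apply Nat.card_congr
    apply Equiv.subtypeEquiv (revCompEquiv m)
    intro q
    rw [PattCond, isAltPerm_iff]
    have hrev : ∀ x : Fin m, (revCompEquiv m q) x = (q x).rev := fun x => rfl
    constructor
    · intro h j hj
      obtain ⟨h1, h2⟩ := h j hj
      simp only [hrev]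
      rw [Fin.rev_lt_rev, Fin.rev_lt_rev]
      exact ⟨fun hp => h1 (by omega), fun hp => h2 (by omega)⟩
    · intro h j hj
      obtain ⟨h1, h2⟩ := h j hj
      simp only [hrev] at h1 h2
      rw [Fin.rev_lt_rev] at h1 h2
      exact ⟨fun hp => h1 (by omega), fun hp => h2 (by omega)⟩
  · rw [eulerNum]
    apply Nat.card_congr
    apply Equiv.subtypeEquivRight
    intro q
    rw [PattCond, isAltPerm_iff]
    constructor
    · intro h j hj
      obtain ⟨h1, h2⟩ := h j hj
      exact ⟨fun hp => h2 (by omega), fun hp => h1 (by omega)⟩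
    · intro h j hj
      obtain ⟨h1, h2⟩ := h j hj
      exact ⟨fun hp => h2 (by omega), fun hp => h1 (by omega)⟩


/-! ### The heart: the alternating-descent condition matches block patterns -/

variable (L) in
def Cond (σ : Equiv.Perm (Fin n)) : Prop :=
  ∀ mIdx, IsAltDescent σ mIdx → ∃ i : ℕ, 1 ≤ i ∧ i < k ∧ mIdx = off L i

lemma cond_iff (hpos : ∀ i, 0 < L i) (hsum : ∑ i, L i = n)
    (e : (Σ i : Fin k, Fin (L i)) ≃ Fin n) :
    Cond L ((posEquiv L hsum).symm.trans e) ↔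
      ∀ i : Fin k, PattCond (off L i.val) (L i) (patt e i) := by
  set σ : Equiv.Perm (Fin n) := (posEquiv L hsum).symm.trans e with hσ
  have hev : ∀ (i : Fin k) (j : Fin (L i)) (h : off L (i : ℕ) + (j : ℕ) < n),
      σ ⟨off L (i : ℕ) + (j : ℕ), h⟩ = e ⟨i, j⟩ := by
    intro i j h
    rw [hσ, Equiv.trans_apply, posEquiv_symm]
  have hne : ∀ (i : Fin k) (a b : Fin (L i)), a ≠ b → ((e ⟨i, a⟩ : ℕ) ≠ (e ⟨i, b⟩ : ℕ)) := by
    intro i a b hab h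
    exact hab (eq_of_heq (Sigma.mk.inj_iff.mp (e.injective (Fin.ext h))).2)
  have hb1 : ∀ i : Fin k, off L ((i : ℕ) + 1) = off L (i : ℕ) + L i := by
    intro i
    have := off_succ L i.isLt
    simpa using this
  have hbn : ∀ i : Fin k, off L ((i : ℕ) + 1) ≤ n := by
    intro i
    rw [← off_k L hsum]
    exact off_mono L i.isLt
  constructor
  · intro hC i j hj
    have key : ∀ (j0 j1 : Fin (L i)), (j1 : ℕ) = (j0 : ℕ) + 1 →
        (((off L (i : ℕ) + (j0 : ℕ) + 1) % 2 = 1 → e ⟨i, j0⟩ < e ⟨i, j1⟩) ∧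
         ((off L (i : ℕ) + (j0 : ℕ) + 1) % 2 = 0 → e ⟨i, j1⟩ < e ⟨i, j0⟩)) := by
      intro j0 j1 hj01
      have hj1lt : (j1 : ℕ) < L i := j1.isLt
      set m := off L (i : ℕ) + (j0 : ℕ) + 1 with hm
      have hmn : m < n := by have := hb1 i; have := hbn i; omega
      have hnotD : ¬ ∃ i' : ℕ, 1 ≤ i' ∧ i' < k ∧ m = off L i' := by
        rintro ⟨i', h1, h2, h3⟩
        rcases le_or_gt i' (i : ℕ) with hle | hlt
        · have := off_mono L hle
          omega
        · have := off_mono L (show (i : ℕ) + 1 ≤ i' from hlt)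
          have := hb1 i
          omega
      have hor : ¬ ((m % 2 = 1 ∧ permEnt σ (m + 1) < permEnt σ m) ∨
          (m % 2 = 0 ∧ permEnt σ m < permEnt σ (m + 1))) :=
        fun hor => hnotD (hC m ⟨by omega, hmn, hor⟩)
      rw [not_or] at hor
      obtain ⟨hor1, hor2⟩ := hor
      have e1 : permEnt σ m = (e ⟨i, j0⟩ : ℕ) + 1 := by
        rw [permEnt_eval σ (by omega) (by omega)]
        have hx : (⟨m - 1, by omega⟩ : Fin n) = ⟨off L (i : ℕ) + (j0 : ℕ), by omega⟩ := by
          simp only [Fin.mk.injEq]; omega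
        rw [hx, hev i j0 (by omega)]
      have e2 : permEnt σ (m + 1) = (e ⟨i, j1⟩ : ℕ) + 1 := by
        rw [permEnt_eval σ (by omega) (by omega)]
        have hx : (⟨m + 1 - 1, by omega⟩ : Fin n) = ⟨off L (i : ℕ) + (j1 : ℕ), by omega⟩ := by
          simp only [Fin.mk.injEq]; omega
        rw [hx, hev i j1 (by omega)]
      rw [e1, e2] at hor1 hor2
      have h6 : (e ⟨i, j0⟩ : ℕ) ≠ (e ⟨i, j1⟩ : ℕ) := by
        refine hne i j0 j1 ?_
        rw [Ne, Fin.ext_iff]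
        omega
      constructor
      · intro hp
        rw [Fin.lt_def]
        have h5 : ¬ ((e ⟨i, j1⟩ : ℕ) + 1 < (e ⟨i, j0⟩ : ℕ) + 1) := fun hh => hor1 ⟨hp, hh⟩
        omega
      · intro hp
        rw [Fin.lt_def]
        have h5 : ¬ ((e ⟨i, j0⟩ : ℕ) + 1 < (e ⟨i, j1⟩ : ℕ) + 1) := fun hh => hor2 ⟨hp, hh⟩
        omega
    obtain ⟨k1, k2⟩ := key ⟨j, by omega⟩ ⟨j + 1, hj⟩ rfl
    exact ⟨fun hp => by rw [patt_lt_iff]; exact k1 hp, fun hp => by rw [patt_lt_iff]; exact k2 hp⟩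
  · intro h mIdx hAD
    obtain ⟨hm1, hmn, hor⟩ := hAD
    have hmn' : mIdx - 1 < n := by omega
    rcases hxx : (posEquiv L hsum).symm ⟨mIdx - 1, hmn'⟩ with ⟨i, j⟩
    have hap : posEquiv L hsum ⟨i, j⟩ = ⟨mIdx - 1, hmn'⟩ := by
      rw [← hxx, Equiv.apply_symm_apply]
    have hd : off L (i : ℕ) + (j : ℕ) = mIdx - 1 := by
      have := congrArg Fin.val hap
      rwa [posEquiv_apply] at this
    by_cases hcase : (j : ℕ) + 1 < L i
    · exfalso
      have hm : off L (i : ℕ) + (j : ℕ) + 1 = mIdx := by omega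
      obtain ⟨g1, g2⟩ := h i (j : ℕ) hcase
      rw [patt_lt_iff, Fin.lt_def] at g1 g2
      simp only [Fin.eta] at g1 g2
      have e1 : permEnt σ mIdx = (e ⟨i, j⟩ : ℕ) + 1 := by
        rw [permEnt_eval σ (by omega) (by omega)]
        have hx : (⟨mIdx - 1, by omega⟩ : Fin n) = ⟨off L (i : ℕ) + (j : ℕ), by omega⟩ := by
          simp only [Fin.mk.injEq]; omega
        rw [hx, hev i j (by omega)]
      have hval : ((⟨(j : ℕ) + 1, hcase⟩ : Fin (L i)) : ℕ) = (j : ℕ) + 1 := rfl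
      have e2 : permEnt σ (mIdx + 1) = (e ⟨i, ⟨(j : ℕ) + 1, hcase⟩⟩ : ℕ) + 1 := by
        rw [permEnt_eval σ (by omega) (by omega)]
        have hx : (⟨mIdx + 1 - 1, by omega⟩ : Fin n)
            = ⟨off L (i : ℕ) + ((⟨(j : ℕ) + 1, hcase⟩ : Fin (L i)) : ℕ), by omega⟩ := by
          simp only [Fin.mk.injEq]; omega
        rw [hx, hev i ⟨(j : ℕ) + 1, hcase⟩ (by omega)]
      rw [e1, e2] at hor
      rcases hor with ⟨hp, hlt⟩ | ⟨hp, hlt⟩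
      · have := g1 (by omega)
        omega
      · have := g2 (by omega)
        omega
    · have hj : (j : ℕ) + 1 = L i := by have := j.isLt; omega
      have hik : (i : ℕ) + 1 < k := by
        by_contra hik
        have heq : (i : ℕ) + 1 = k := by have := i.isLt; omega
        have h1 := hb1 i
        rw [heq, off_k L hsum] at h1
        omega
      exact ⟨(i : ℕ) + 1, by omega, hik, by have := hb1 i; omega⟩


/-! ### Assembly -/

def prodSubEquiv {A B : Type*} (P : B → Prop) : {x : A × B // P x.2} ≃ A × {b // P b} where
  toFun x := (x.1.1, ⟨x.1.2, x.2⟩)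
  invFun x := ⟨(x.1, x.2.1), x.2.2⟩
  left_inv x := rfl
  right_inv x := rfl

lemma main (hpos : ∀ i, 0 < L i) (hsum : ∑ i, L i = n) :
    Nat.card {σ : Equiv.Perm (Fin n) // Cond L σ} =
      Nat.multinomial Finset.univ L * ∏ i, eulerNum (L i) := by
  classical
  set Part := {S : Fin k → Finset (Fin n) //
      ∃ e : (Σ i : Fin k, Fin (L i)) ≃ Fin n, blockSet e = S} with hPart
  let E1 : ((Σ i : Fin k, Fin (L i)) ≃ Fin n) ≃ Equiv.Perm (Fin n) :=
    { toFun := fun e => (posEquiv L hsum).symm.trans e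
      invFun := fun σ => (posEquiv L hsum).trans σ
      left_inv := fun e => by
        ext x
        simp [Equiv.trans_apply]
      right_inv := fun σ => by
        ext x
        simp [Equiv.trans_apply] }
  have E0 : {e : (Σ i : Fin k, Fin (L i)) ≃ Fin n //
      ∀ i : Fin k, PattCond (off L i.val) (L i) (patt e i)} ≃
      {σ : Equiv.Perm (Fin n) // Cond L σ} :=
    Equiv.subtypeEquiv E1 (fun e => (cond_iff hpos hsum e).symm)
  have E2 : {e : (Σ i : Fin k, Fin (L i)) ≃ Fin n //
      ∀ i : Fin k, PattCond (off L i.val) (L i) (patt e i)} ≃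
      {x : Part × (∀ i, Equiv.Perm (Fin (L i))) //
        ∀ i : Fin k, PattCond (off L i.val) (L i) (x.2 i)} :=
    Equiv.subtypeEquiv (PhiEquiv L) (fun e => Iff.rfl)
  have E3 := prodSubEquiv (A := Part)
    (fun g : ∀ i, Equiv.Perm (Fin (L i)) => ∀ i : Fin k, PattCond (off L i.val) (L i) (g i))
  have E4 : {g : ∀ i, Equiv.Perm (Fin (L i)) // ∀ i : Fin k, PattCond (off L i.val) (L i) (g i)}
      ≃ ∀ i : Fin k, {q : Equiv.Perm (Fin (L i)) // PattCond (off L i.val) (L i) q} :=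
    Equiv.subtypePiEquivPi
  have hcard1 : Nat.card {σ : Equiv.Perm (Fin n) // Cond L σ}
      = Nat.card Part * ∏ i, eulerNum (L i) := by
    rw [Nat.card_congr (E0.symm.trans (E2.trans (E3.trans
      (Equiv.prodCongr (Equiv.refl Part) E4))))]
    rw [Nat.card_prod, Nat.card_pi]
    congr 1
    exact Finset.prod_congr rfl fun i _ => pattCond_card _ _
  have hXPerm : Nat.card ((Σ i : Fin k, Fin (L i)) ≃ Fin n) = n.factorial := by
    rw [Nat.card_congr E1, Nat.card_eq_fintype_card, Fintype.card_perm, Fintype.card_fin]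
  have hX2 : Nat.card ((Σ i : Fin k, Fin (L i)) ≃ Fin n)
      = Nat.card Part * ∏ i, (L i).factorial := by
    rw [Nat.card_congr (PhiEquiv L), Nat.card_prod, Nat.card_pi]
    congr 1
    refine Finset.prod_congr rfl fun i _ => ?_
    rw [Nat.card_eq_fintype_card, Fintype.card_perm, Fintype.card_fin]
  have hmult := Nat.multinomial_spec Finset.univ L
  rw [hsum] at hmult
  have hP : 0 < ∏ i, (L i).factorial :=
    Finset.prod_pos fun i _ => Nat.factorial_pos _
  have hPartCard : Nat.card Part = Nat.multinomial Finset.univ L := by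
    apply Nat.eq_of_mul_eq_mul_right hP
    rw [← hX2, hXPerm, ← hmult]
    exact Nat.mul_comm _ _
  rw [hcard1, hPartCard]

end Stmt11

/-- for a composition `L = (L₁, …, L_k)` of `n`, the number of permutations
of `[n]` whose set of alternating descents is contained in
`D(L) = {L₁, L₁+L₂, …, L₁+⋯+L_{k−1}}` equals `(n!/(L₁!·⋯·L_k!))·E_{L₁}·⋯·E_{L_k}`. -/
theorem statement11 (n k : ℕ) (L : Fin k → ℕ) (hpos : ∀ i, 0 < L i)
    (hsum : ∑ i, L i = n) :
    Nat.card {σ : Equiv.Perm (Fin n) //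
        ∀ mIdx, IsAltDescent σ mIdx → ∃ i : ℕ, 1 ≤ i ∧ i < k ∧
          mIdx = ∑ j ∈ Finset.univ.filter (fun j : Fin k => (j : ℕ) < i), L j} =
      Nat.multinomial Finset.univ L * ∏ i, eulerNum (L i) :=
  Stmt11.main (L := L) hpos hsum
end

section
/- Fix an integer m ≥ 1. Let sₘ(n) be the number of permutations of [n] whose set of alternating descents is exactly {m, 2m, …, n−m} when m divides n (so sₘ(0)=1), and sₘ(n)=0 when m does not divide n; equivalently, sₘ(n) is the number of permutations of [n] all of whose alternating runs have length exactly m. Then in ℚ⟦X⟧: (Σ_{k=0}^∞ (−1)ᵏ·E_{mk}·X^{mk}/(mk)!) · (Σ_{n=0}^∞ sₘ(n)·Xⁿ/n!) = 1. -/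
/-- `sCount m n`: the number of permutations of `[n]` whose set of alternating descents is
exactly `{m, 2m, …, n−m}` when `m ∣ n`, and `0` otherwise; equivalently, the number of
permutations of `[n]` all of whose alternating runs have length exactly `m`. -/
noncomputable def sCount (m n : ℕ) : ℕ :=
  if m ∣ n then
    Nat.card {σ : Equiv.Perm (Fin n) // ∀ i, IsAltDescent σ i ↔ (1 ≤ i ∧ i < n ∧ m ∣ i)}
  else 0

open Finset Equiv

abbrev Pm (n : ℕ) := Equiv.Perm (Fin n)

lemma permEnt_of_range {n : ℕ} (σ : Pm n) {i : ℕ} (h1 : 1 ≤ i) (h2 : i ≤ n) :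
    permEnt σ i = (σ ⟨i - 1, by omega⟩ : ℕ) + 1 := dif_pos ⟨h1, h2⟩

lemma permEnt_ne_s15 {n : ℕ} (σ : Pm n) {i : ℕ} (h1 : 1 ≤ i) (h2 : i < n) :
    permEnt σ i ≠ permEnt σ (i + 1) := by
  rw [permEnt_of_range σ h1 (by omega), permEnt_of_range σ (i := i + 1) (by omega) (by omega)]
  intro h
  have h2' : (σ ⟨i - 1, by omega⟩ : ℕ) = (σ ⟨i + 1 - 1, by omega⟩ : ℕ) := by omega
  have h3 := σ.injective (Fin.ext h2')
  have h4 : i - 1 = i + 1 - 1 := congrArg Fin.val h3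
  omega

lemma isAltPerm_iff_s15 {n : ℕ} (σ : Pm n) :
    IsAltPerm σ ↔ ∀ i, 1 ≤ i → i < n → IsAltDescent σ i := by
  constructor
  · intro h i h1 h2
    obtain ⟨ha, hb⟩ := h i h1 h2
    refine ⟨h1, h2, ?_⟩
    rcases Nat.mod_two_eq_zero_or_one i with h0 | h0
    · exact Or.inr ⟨h0, hb h0⟩
    · exact Or.inl ⟨h0, ha h0⟩
  · intro h i h1 h2
    obtain ⟨-, -, hd⟩ := h i h1 h2
    constructor <;> intro hp <;> rcases hd with ⟨hq, hr⟩ | ⟨hq, hr⟩ <;> first | exact hr | omega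

lemma permEnt_revPerm_mul {n : ℕ} (σ : Pm n) {j : ℕ} (hj1 : 1 ≤ j) (hj2 : j ≤ n) :
    permEnt (Fin.revPerm * σ) j = n - (σ ⟨j - 1, by omega⟩ : ℕ) := by
  rw [permEnt_of_range _ hj1 hj2]
  have h : (((Fin.revPerm : Pm n) * σ) ⟨j - 1, by omega⟩ : Fin n) = Fin.rev (σ ⟨j - 1, by omega⟩) := by
    rw [Equiv.Perm.mul_apply, Fin.revPerm_apply]
  rw [h, Fin.val_rev]
  have := (σ ⟨j - 1, by omega⟩).isLt
  omega

/-- complementation: `σ ↦ rev ∘ σ` flips alternating descents in range. -/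
lemma isAltDescent_revPerm_mul {n : ℕ} (σ : Pm n) {i : ℕ} (h1 : 1 ≤ i) (h2 : i < n) :
    (IsAltDescent ((Fin.revPerm : Pm n) * σ) i ↔ ¬ IsAltDescent σ i) := by
  have e1 := permEnt_of_range σ h1 (le_of_lt h2)
  have e2 := permEnt_of_range σ (i := i + 1) (by omega) (by omega)
  have f1 := permEnt_revPerm_mul σ h1 (le_of_lt h2)
  have f2 := permEnt_revPerm_mul σ (j := i + 1) (by omega) (by omega)
  have b1 := (σ ⟨i - 1, by omega⟩).isLt
  have b2 := (σ ⟨i + 1 - 1, by omega⟩).isLt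
  have hne := permEnt_ne_s15 σ h1 h2
  rw [permEnt_of_range σ h1 (le_of_lt h2), permEnt_of_range σ (i := i + 1) (by omega) (by omega)] at hne
  constructor
  · rintro ⟨-, -, ⟨hq, hr⟩ | ⟨hq, hr⟩⟩ ⟨-, -, ⟨hq', hr'⟩ | ⟨hq', hr'⟩⟩ <;>
      rw [e1, e2] at hr' <;> rw [f1, f2] at hr <;> omega
  · intro hno
    refine ⟨h1, h2, ?_⟩
    rcases Nat.mod_two_eq_zero_or_one i with h0 | h0
    · refine Or.inr ⟨h0, ?_⟩
      rw [f1, f2]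
      have : ¬ ((σ ⟨i - 1, by omega⟩ : ℕ) + 1 < (σ ⟨i + 1 - 1, by omega⟩ : ℕ) + 1) := by
        intro hlt
        exact hno ⟨h1, h2, Or.inr ⟨h0, by rw [e1, e2]; omega⟩⟩
      omega
    · refine Or.inl ⟨h0, ?_⟩
      rw [f1, f2]
      have : ¬ ((σ ⟨i + 1 - 1, by omega⟩ : ℕ) + 1 < (σ ⟨i - 1, by omega⟩ : ℕ) + 1) := by
        intro hlt
        exact hno ⟨h1, h2, Or.inl ⟨h0, by rw [e1, e2]; omega⟩⟩
      omega

/-- Cardinality is invariant under pointwise flipping of alternating descents. -/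
lemma card_comp_s15 {n : ℕ} (R : ℕ → Prop → Prop) :
    Nat.card {σ : Pm n // ∀ i, 1 ≤ i → i < n → R i (IsAltDescent σ i)} =
    Nat.card {σ : Pm n // ∀ i, 1 ≤ i → i < n → R i (¬ IsAltDescent σ i)} := by
  apply Nat.card_congr
  refine Equiv.subtypeEquiv (Equiv.mulLeft (Fin.revPerm : Pm n)) (fun σ => ?_)
  constructor
  · intro h i h1 h2
    have hiff : IsAltDescent ((Fin.revPerm : Pm n) * σ) i ↔ ¬ IsAltDescent σ i :=
      isAltDescent_revPerm_mul σ h1 h2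
    have : ¬ IsAltDescent ((Fin.revPerm : Pm n) * σ) i ↔ IsAltDescent σ i := by tauto
    rw [show ((Equiv.mulLeft (Fin.revPerm : Pm n)) σ) = (Fin.revPerm : Pm n) * σ from rfl]
    rw [propext this]
    exact h i h1 h2
  · intro h i h1 h2
    have hh := h i h1 h2
    rw [show ((Equiv.mulLeft (Fin.revPerm : Pm n)) σ) = (Fin.revPerm : Pm n) * σ from rfl] at hh
    have : ¬ IsAltDescent ((Fin.revPerm : Pm n) * σ) i ↔ IsAltDescent σ i := by
      have := isAltDescent_revPerm_mul σ (i := i) h1 h2; tauto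
    rwa [propext this] at hh

lemma eulerNum_eq_card {n : ℕ} :
    eulerNum n = Nat.card {σ : Pm n // ∀ i, 1 ≤ i → i < n → IsAltDescent σ i} := by
  unfold eulerNum
  exact Nat.card_congr (Equiv.subtypeEquiv (Equiv.refl _) (fun σ => by
    simpa using isAltPerm_iff_s15 σ))

section Split
variable {a b : ℕ}

lemma compl_card (A : Finset (Fin (a + b))) (hA : A.card = a) : Aᶜ.card = b := by
  have h := Finset.card_compl A
  rw [Fintype.card_fin, hA] at h
  omega

noncomputable def placeEquiv (A : Finset (Fin (a + b))) (hA : A.card = a) :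
    Fin a ⊕ Fin b ≃ Fin (a + b) :=
  (Equiv.sumCongr (A.orderIsoOfFin hA).toEquiv ((Aᶜ).orderIsoOfFin (compl_card A hA)).toEquiv).trans
    ((Equiv.sumCongr (Equiv.refl _) (Equiv.subtypeEquivRight (fun x => Finset.mem_compl))).trans
      (Equiv.sumCompl (· ∈ A)))

noncomputable def concatPerm (A : Finset (Fin (a + b))) (hA : A.card = a)
    (σ : Pm a) (τ : Pm b) : Pm (a + b) :=
  finSumFinEquiv.symm.trans ((Equiv.sumCongr σ τ).trans (placeEquiv A hA))

variable (A : Finset (Fin (a + b))) (hA : A.card = a) (σ : Pm a) (τ : Pm b)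

lemma concatPerm_castAdd (i : Fin a) :
    concatPerm A hA σ τ (Fin.castAdd b i) = ↑(A.orderIsoOfFin hA (σ i)) := by
  simp [concatPerm, placeEquiv, finSumFinEquiv_symm_apply_castAdd]

lemma concatPerm_natAdd (i : Fin b) :
    concatPerm A hA σ τ (Fin.natAdd a i) = ↑((Aᶜ).orderIsoOfFin (compl_card A hA) (τ i)) := by
  simp [concatPerm, placeEquiv, finSumFinEquiv_symm_apply_natAdd]

lemma permEnt_concat_lo {p : ℕ} (h1 : 1 ≤ p) (h2 : p ≤ a) :
    permEnt (concatPerm A hA σ τ) p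
      = ((A.orderIsoOfFin hA (σ ⟨p - 1, by omega⟩) : Fin (a + b)) : ℕ) + 1 := by
  rw [permEnt_of_range _ h1 (by omega)]
  congr 2
  have he : (⟨p - 1, by omega⟩ : Fin (a + b)) = Fin.castAdd b ⟨p - 1, by omega⟩ := rfl
  rw [he, concatPerm_castAdd]

lemma permEnt_concat_hi {p : ℕ} (h1 : 1 ≤ p) (h2 : p ≤ b) :
    permEnt (concatPerm A hA σ τ) (a + p)
      = (((Aᶜ).orderIsoOfFin (compl_card A hA) (τ ⟨p - 1, by omega⟩) : Fin (a + b)) : ℕ) + 1 := by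
  rw [permEnt_of_range _ (by omega) (by omega)]
  congr 2
  have he : (⟨a + p - 1, by omega⟩ : Fin (a + b)) = Fin.natAdd a ⟨p - 1, by omega⟩ :=
    Fin.ext (by simp [Fin.natAdd]; omega)
  rw [he, concatPerm_natAdd]

lemma orderIso_lt_iff {k : ℕ} (B : Finset (Fin (a + b))) (hB : B.card = k) (u v : Fin k) :
    ((B.orderIsoOfFin hB u : Fin (a + b)) : ℕ) < ((B.orderIsoOfFin hB v : Fin (a + b)) : ℕ)
      ↔ (u : ℕ) < (v : ℕ) := by
  rw [Fin.val_fin_lt, Subtype.coe_lt_coe, OrderIso.lt_iff_lt, ← Fin.val_fin_lt]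

lemma permEnt_concat_lt_lo {p q : ℕ} (hp1 : 1 ≤ p) (hp2 : p ≤ a) (hq1 : 1 ≤ q) (hq2 : q ≤ a) :
    (permEnt (concatPerm A hA σ τ) p < permEnt (concatPerm A hA σ τ) q
      ↔ permEnt σ p < permEnt σ q) := by
  rw [permEnt_concat_lo A hA σ τ hp1 hp2, permEnt_concat_lo A hA σ τ hq1 hq2,
    permEnt_of_range σ hp1 hp2, permEnt_of_range σ hq1 hq2]
  simp only [Nat.add_lt_add_iff_right]
  rw [orderIso_lt_iff]


lemma permEnt_concat_lt_hi (A : Finset (Fin (a + b))) (hA : A.card = a) (σ : Pm a) (τ : Pm b)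
    {p q : ℕ} (hp1 : 1 ≤ p) (hp2 : p ≤ b) (hq1 : 1 ≤ q) (hq2 : q ≤ b) :
    (permEnt (concatPerm A hA σ τ) (a + p) < permEnt (concatPerm A hA σ τ) (a + q)
      ↔ permEnt τ p < permEnt τ q) := by
  rw [permEnt_concat_hi A hA σ τ hp1 hp2, permEnt_concat_hi A hA σ τ hq1 hq2,
    permEnt_of_range τ hp1 hp2, permEnt_of_range τ hq1 hq2]
  simp only [Nat.add_lt_add_iff_right]
  rw [orderIso_lt_iff]

lemma isAltDescent_concat_lo (A : Finset (Fin (a + b))) (hA : A.card = a) (σ : Pm a) (τ : Pm b)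
    {i : ℕ} (h1 : 1 ≤ i) (h2 : i < a) :
    (IsAltDescent (concatPerm A hA σ τ) i ↔ IsAltDescent σ i) := by
  have c1 := permEnt_concat_lt_lo A hA σ τ (p := i + 1) (q := i) (by omega) (by omega) h1 (by omega)
  have c2 := permEnt_concat_lt_lo A hA σ τ (p := i) (q := i + 1) h1 (by omega) (by omega) (by omega)
  unfold IsAltDescent
  simp only [c1, c2]
  omega

lemma isAltDescent_concat_hi (A : Finset (Fin (a + b))) (hA : A.card = a) (σ : Pm a) (τ : Pm b)
    {i : ℕ} (h1 : 1 ≤ i) (h2 : i < b) :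
    (IsAltDescent (concatPerm A hA σ τ) (a + i) ↔ (a % 2 = 0 ↔ IsAltDescent τ i)) := by
  have c1 := permEnt_concat_lt_hi A hA σ τ (p := i + 1) (q := i) (by omega) (by omega) h1 (by omega)
  have c2 := permEnt_concat_lt_hi A hA σ τ (p := i) (q := i + 1) h1 (by omega) (by omega) (by omega)
  have hadd : a + i + 1 = a + (i + 1) := by omega
  have hne := permEnt_ne_s15 τ h1 h2
  unfold IsAltDescent
  rw [hadd]
  simp only [c1, c2]
  omega


noncomputable def concatFun :
    ({A : Finset (Fin (a + b)) // A.card = a} × Pm a × Pm b) → Pm (a + b) :=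
  fun x => concatPerm x.1.1 x.1.2 x.2.1 x.2.2

lemma mem_iff_concat (A : Finset (Fin (a + b))) (hA : A.card = a) (σ : Pm a) (τ : Pm b)
    (v : Fin (a + b)) :
    v ∈ A ↔ ∃ i : Fin a, concatPerm A hA σ τ (Fin.castAdd b i) = v := by
  constructor
  · intro hv
    obtain ⟨j, hj⟩ := (A.orderIsoOfFin hA).surjective ⟨v, hv⟩
    refine ⟨σ.symm j, ?_⟩
    rw [concatPerm_castAdd, Equiv.apply_symm_apply, hj]
  · rintro ⟨i, rfl⟩
    rw [concatPerm_castAdd]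
    exact (A.orderIsoOfFin hA (σ i)).2

lemma concatFun_injective : Function.Injective (concatFun (a := a) (b := b)) := by
  rintro ⟨⟨A, hA⟩, σ, τ⟩ ⟨⟨A', hA'⟩, σ', τ'⟩ h
  simp only [concatFun] at h
  have hAA : A = A' := by
    ext v
    rw [mem_iff_concat A hA σ τ v, mem_iff_concat A' hA' σ' τ' v]
    constructor <;> rintro ⟨i, hi⟩ <;> exact ⟨i, by rw [← hi, h]⟩ <;> rfl
  subst hAA
  have hσ : σ = σ' := by
    apply Equiv.ext; intro i
    have := DFunLike.congr_fun h (Fin.castAdd b i)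
    rw [concatPerm_castAdd, concatPerm_castAdd] at this
    exact (A.orderIsoOfFin hA).injective (Subtype.ext this)
  have hτ : τ = τ' := by
    apply Equiv.ext; intro i
    have := DFunLike.congr_fun h (Fin.natAdd a i)
    rw [concatPerm_natAdd, concatPerm_natAdd] at this
    exact ((Aᶜ).orderIsoOfFin (compl_card A hA)).injective (Subtype.ext this)
  simp [hσ, hτ]

lemma concatFun_bijective : Function.Bijective (concatFun (a := a) (b := b)) := by
  rw [Fintype.bijective_iff_injective_and_card]
  refine ⟨concatFun_injective, ?_⟩
  rw [Fintype.card_prod, Fintype.card_prod, Fintype.card_perm, Fintype.card_perm,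
    Fintype.card_finset_len, Fintype.card_fin, Fintype.card_perm, Fintype.card_fin,
    Fintype.card_fin, Fintype.card_fin]
  have h := Nat.choose_mul_factorial_mul_factorial (n := a + b) (k := a) (by omega)
  have hb : a + b - a = b := by omega
  rw [hb] at h
  rw [← h]; ring


lemma card_split (R : ℕ → Prop → Prop) (hRa : ∀ P : Prop, R a P) :
    Nat.card {π : Pm (a + b) // ∀ i, 1 ≤ i → i < a + b → R i (IsAltDescent π i)} =
    (a + b).choose a
      * Nat.card {σ : Pm a // ∀ i, 1 ≤ i → i < a → R i (IsAltDescent σ i)}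
      * Nat.card {τ : Pm b // ∀ i, 1 ≤ i → i < b → R (a + i) ((a % 2 = 0) ↔ IsAltDescent τ i)} := by
  classical
  set Φ : Pm (a + b) → Prop := fun π => ∀ i, 1 ≤ i → i < a + b → R i (IsAltDescent π i) with hΦ
  set Φa : Pm a → Prop := fun σ => ∀ i, 1 ≤ i → i < a → R i (IsAltDescent σ i) with hΦa
  set Φb : Pm b → Prop := fun τ => ∀ i, 1 ≤ i → i < b → R (a + i) ((a % 2 = 0) ↔ IsAltDescent τ i)
    with hΦb
  have key : ∀ x : ({A : Finset (Fin (a + b)) // A.card = a} × Pm a × Pm b),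
      Φ (concatFun x) ↔ Φa x.2.1 ∧ Φb x.2.2 := by
    rintro ⟨⟨A, hA⟩, σ, τ⟩
    show Φ (concatPerm A hA σ τ) ↔ _
    constructor
    · intro H
      constructor
      · intro i h1 h2
        have := H i h1 (by omega)
        rwa [propext (isAltDescent_concat_lo A hA σ τ h1 h2)] at this
      · intro i h1 h2
        have := H (a + i) (by omega) (by omega)
        rwa [propext (isAltDescent_concat_hi A hA σ τ h1 h2)] at this
    · rintro ⟨Ha, Hb⟩ i h1 h2
      rcases lt_trichotomy i a with h | h | h
      · rw [propext (isAltDescent_concat_lo A hA σ τ h1 h)]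
        exact Ha i h1 h
      · subst h; exact hRa _
      · have h1' : 1 ≤ i - a := by omega
        have h2' : i - a < b := by omega
        have : i = a + (i - a) := by omega
        rw [this, propext (isAltDescent_concat_hi A hA σ τ h1' h2')]
        exact Hb (i - a) h1' h2'
  have e1 : {π : Pm (a + b) // Φ π} ≃
      {x : ({A : Finset (Fin (a + b)) // A.card = a} × Pm a × Pm b) // Φ (concatFun x)} :=
    ((Equiv.ofBijective _ concatFun_bijective).subtypeEquiv (fun x => Iff.rfl)).symm
  have e2 : {x : ({A : Finset (Fin (a + b)) // A.card = a} × Pm a × Pm b) // Φ (concatFun x)} ≃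
      {A : Finset (Fin (a + b)) // A.card = a} × {σ : Pm a // Φa σ} × {τ : Pm b // Φb τ} := by
    refine Equiv.trans (Equiv.subtypeEquivRight (q := fun x => True ∧ (Φa x.2.1 ∧ Φb x.2.2))
      (fun x => by rw [key x]; tauto)) ?_
    refine Equiv.trans (Equiv.subtypeProdEquivProd (p := fun _ => True)
      (q := fun (yz : Pm a × Pm b) => Φa yz.1 ∧ Φb yz.2)) ?_
    refine Equiv.prodCongr (Equiv.subtypeUnivEquiv (fun _ => trivial)) ?_
    exact Equiv.subtypeProdEquivProd (p := Φa) (q := Φb)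
  rw [Nat.card_congr (e1.trans e2), Nat.card_prod, Nat.card_prod]
  rw [Nat.card_eq_fintype_card (α := {A : Finset (Fin (a + b)) // A.card = a}),
    Fintype.card_finset_len, Fintype.card_fin]
  ring

end Split

noncomputable def Asub (n : ℕ) (T : Finset ℕ) : ℕ :=
  Nat.card {σ : Pm n // ∀ i, 1 ≤ i → i < n → i ∉ T → ¬ IsAltDescent σ i}

noncomputable def Aex (n : ℕ) (T : Finset ℕ) : ℕ :=
  Nat.card {σ : Pm n // ∀ i, 1 ≤ i → i < n → (IsAltDescent σ i ↔ i ∈ T)}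

lemma Asub_empty (n : ℕ) : Asub n ∅ = eulerNum n := by
  rw [eulerNum_eq_card]
  unfold Asub
  rw [Nat.card_congr (Equiv.subtypeEquivRight (q := fun σ : Pm n =>
    ∀ i, 1 ≤ i → i < n → ¬ IsAltDescent σ i) (fun σ => by simp))]
  exact (card_comp_s15 (fun _ X => X)).symm

def shiftEmb (a : ℕ) : ℕ ↪ ℕ := ⟨fun x => a + x, fun x y h => Nat.add_left_cancel h⟩

lemma shiftEmb_apply (a x : ℕ) : shiftEmb a x = a + x := rfl

lemma mem_shift_lo {a : ℕ} {T : Finset ℕ} {i : ℕ} (h : i < a) :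
    i ∉ insert a (T.map (shiftEmb a)) := by
  simp only [Finset.mem_insert, Finset.mem_map, shiftEmb_apply, Function.Embedding.coeFn_mk]
  rintro (rfl | ⟨x, hx, rfl⟩) <;> omega

lemma mem_shift_hi {a : ℕ} {T : Finset ℕ} {i : ℕ} (h1 : 1 ≤ i) :
    (a + i ∈ insert a (T.map (shiftEmb a))) ↔ i ∈ T := by
  simp only [Finset.mem_insert, Finset.mem_map, shiftEmb_apply, Function.Embedding.coeFn_mk]
  constructor
  · rintro (h | ⟨x, hx, hxe⟩)
    · omega
    · have : x = i := by omega
      rwa [← this]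
  · intro h; exact Or.inr ⟨i, h, rfl⟩

lemma Asub_split (a b : ℕ) (T : Finset ℕ) :
    Asub (a + b) (insert a (T.map (shiftEmb a))) = (a + b).choose a * eulerNum a * Asub b T := by
  classical
  unfold Asub
  rw [card_split (R := fun i X => i ∉ insert a (T.map (shiftEmb a)) → ¬ X)
    (hRa := fun P h => (h (Finset.mem_insert_self _ _)).elim)]
  congr 1
  · congr 1
    rw [← Asub_empty a]
    unfold Asub
    apply Nat.card_congr; apply Equiv.subtypeEquivRight; intro σ
    constructor
    · intro H i h1 h2 _
      exact H i h1 h2 (mem_shift_lo h2)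
    · intro H i h1 h2 _
      exact H i h1 h2 (by simp)
  · rcases Nat.mod_two_eq_zero_or_one a with ha | ha
    · apply Nat.card_congr; apply Equiv.subtypeEquivRight; intro τ
      constructor
      · intro H i h1 h2 hm hd
        exact H i h1 h2 (fun hmem => (hm ((mem_shift_hi h1).mp hmem)).elim) ⟨fun _ => hd, fun _ => ha⟩
      · intro H i h1 h2 hmem hiff
        exact H i h1 h2 (fun hm => hmem ((mem_shift_hi h1).mpr hm)) (hiff.mp ha)
    · have step1 : Nat.card {τ : Pm b // ∀ i, 1 ≤ i → i < b →
          (a + i ∉ insert a (T.map (shiftEmb a)) → ¬ ((a % 2 = 0) ↔ IsAltDescent τ i))} =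
        Nat.card {τ : Pm b // ∀ i, 1 ≤ i → i < b → (i ∉ T → IsAltDescent τ i)} := by
        apply Nat.card_congr; apply Equiv.subtypeEquivRight; intro τ
        constructor
        · intro H i h1 h2 hm
          have := H i h1 h2 (fun hmem => (hm ((mem_shift_hi h1).mp hmem)).elim)
          by_contra hno
          exact this (by constructor <;> intro h' <;> [omega; exact (hno h').elim])
        · intro H i h1 h2 hmem hiff
          have had := H i h1 h2 (fun hm => hmem ((mem_shift_hi h1).mpr hm))
          exact absurd (hiff.mpr had) (by omega)
      rw [step1]
      have step2 := card_comp_s15 (n := b) (R := fun i X => i ∉ T → ¬ X)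
      refine Eq.trans ?_ step2.symm
      apply Nat.card_congr; apply Equiv.subtypeEquivRight; intro τ
      constructor
      · intro H i h1 h2 hm hno
        exact hno (H i h1 h2 hm)
      · intro H i h1 h2 hm
        by_contra hno
        exact H i h1 h2 hm hno

section Moebius
variable {n : ℕ}

noncomputable def ADfin (σ : Pm n) : Finset ℕ := (Finset.range n).filter (fun i => IsAltDescent σ i)

lemma mem_ADfin {σ : Pm n} {i : ℕ} : i ∈ ADfin σ ↔ IsAltDescent σ i := by
  simp only [ADfin, Finset.mem_filter, Finset.mem_range]
  exact ⟨fun h => h.2, fun h => ⟨h.2.1, h⟩⟩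

lemma Asub_eq_sum_Aex (T : Finset ℕ) (hT : ∀ x ∈ T, 1 ≤ x ∧ x < n) :
    Asub n T = ∑ U ∈ T.powerset, Aex n U := by
  classical
  unfold Asub Aex
  have e : {σ : Pm n // ∀ i, 1 ≤ i → i < n → i ∉ T → ¬ IsAltDescent σ i} ≃
      (Σ U : {U : Finset ℕ // U ∈ T.powerset},
        {σ : Pm n // ∀ i, 1 ≤ i → i < n → (IsAltDescent σ i ↔ i ∈ U.val)}) := by
    refine ⟨fun x => ⟨⟨ADfin x.1, ?_⟩, ⟨x.1, fun i h1 h2 => mem_ADfin.symm⟩⟩,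
      fun y => ⟨y.2.1, fun i h1 h2 hiT had => ?_⟩, fun x => rfl, fun y => ?_⟩
    · rw [Finset.mem_powerset]
      intro x' hx'
      have had := mem_ADfin.mp hx'
      by_contra hxT
      exact x.2 x' had.1 had.2.1 hxT had
    · have := (y.2.2 i h1 h2).mp had
      exact hiT (Finset.mem_powerset.mp y.1.2 this)
    · rcases y with ⟨⟨U, hU⟩, ⟨σ, hσ⟩⟩
      have hADU : ADfin σ = U := by
        ext x
        rw [mem_ADfin]
        constructor
        · intro had; exact (hσ x had.1 had.2.1).mp had
        · intro hx
          obtain ⟨hx1, hx2⟩ := hT x (Finset.mem_powerset.mp hU hx)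
          exact (hσ x hx1 hx2).mpr hx
      exact Sigma.ext (Subtype.ext hADU) (by subst hADU; rfl)
  rw [Nat.card_congr e, Nat.card_eq_fintype_card, Fintype.card_sigma,
    ← Finset.sum_coe_sort T.powerset]
  apply Finset.sum_congr rfl
  intro U _
  rw [Nat.card_eq_fintype_card]

lemma moebius (D : Finset ℕ) (hD : ∀ x ∈ D, 1 ≤ x ∧ x < n) :
    (Aex n D : ℤ) = ∑ T ∈ D.powerset, (-1 : ℤ) ^ ((D \ T).card) * Asub n T := by
  classical
  symm
  have hstep : ∀ T ∈ D.powerset, ((Asub n T : ℤ)) = ∑ U ∈ T.powerset, (Aex n U : ℤ) := by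
    intro T hT
    rw [Finset.mem_powerset] at hT
    rw [Asub_eq_sum_Aex T (fun x hx => hD x (hT hx))]
    push_cast
    rfl
  calc ∑ T ∈ D.powerset, (-1 : ℤ) ^ ((D \ T).card) * Asub n T
      = ∑ T ∈ D.powerset, ∑ U ∈ T.powerset, (-1 : ℤ) ^ ((D \ T).card) * Aex n U := by
        apply Finset.sum_congr rfl
        intro T hT
        rw [hstep T hT, Finset.mul_sum]
    _ = ∑ U ∈ D.powerset, ∑ T ∈ D.powerset.filter (fun T => U ⊆ T),
          (-1 : ℤ) ^ ((D \ T).card) * Aex n U := by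
        apply Finset.sum_comm'
        intro T U
        simp only [Finset.mem_powerset, Finset.mem_filter]
        constructor
        · rintro ⟨h1, h2⟩; exact ⟨⟨h1, h2⟩, h2.trans h1⟩
        · rintro ⟨⟨h1, h2⟩, h3⟩; exact ⟨h1, h2⟩
    _ = ∑ U ∈ D.powerset, (if U = D then 1 else 0) * (Aex n U : ℤ) := by
        apply Finset.sum_congr rfl
        intro U hU
        rw [Finset.mem_powerset] at hU
        rw [← Finset.sum_mul]
        congr 1
        have hbij : ∑ T ∈ D.powerset.filter (fun T => U ⊆ T), (-1 : ℤ) ^ ((D \ T).card)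
            = ∑ W ∈ (D \ U).powerset, (-1 : ℤ) ^ W.card := by
          apply Finset.sum_bij' (i := fun T _ => D \ T) (j := fun W _ => D \ W)
          · intro T hT
            simp only [Finset.mem_filter, Finset.mem_powerset] at hT ⊢
            exact Finset.sdiff_subset_sdiff le_rfl hT.2
          · intro W hW
            simp only [Finset.mem_filter, Finset.mem_powerset] at hW ⊢
            constructor
            · exact Finset.sdiff_subset
            · intro x hx
              rw [Finset.mem_sdiff]
              exact ⟨hU hx, fun hxW => (Finset.mem_sdiff.mp (hW hxW)).2 hx⟩
          · intro T hT
            simp only [Finset.mem_filter, Finset.mem_powerset] at hT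
            exact Finset.sdiff_sdiff_eq_self hT.1
          · intro W hW
            simp only [Finset.mem_powerset] at hW
            exact Finset.sdiff_sdiff_eq_self (hW.trans Finset.sdiff_subset)
          · intro T hT; rfl
        rw [hbij, Finset.sum_powerset_neg_one_pow_card]
        by_cases h : U = D
        · subst h; simp
        · rw [if_neg h, if_neg]
          intro hemp
          exact h (Finset.Subset.antisymm hU (fun x hx => by
            by_contra hxU
            have : x ∈ D \ U := Finset.mem_sdiff.mpr ⟨hx, hxU⟩
            rw [hemp] at this
            exact absurd this (Finset.notMem_empty x)))
    _ = (Aex n D : ℤ) := by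
        rw [Finset.sum_eq_single D (fun U hU hne => by rw [if_neg hne, zero_mul])
          (fun h => absurd (Finset.mem_powerset_self D) h)]
        simp

end Moebius

lemma neg_pow_sub_helper {t s : ℕ} (h : t ≤ s) : (-1 : ℤ) ^ (s - t) = (-1) ^ s * (-1) ^ t := by
  have h1 : (-1 : ℤ) ^ (s - t) * (-1) ^ t = (-1) ^ s := by
    rw [← pow_add]; congr 1; omega
  have h2 : ((-1 : ℤ) ^ t) * ((-1) ^ t) = 1 := by
    rw [← pow_add]; exact Even.neg_one_pow ⟨t, by omega⟩
  calc (-1 : ℤ) ^ (s - t) = (-1) ^ (s - t) * ((-1) ^ t * (-1) ^ t) := by rw [h2, mul_one]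
    _ = ((-1) ^ (s - t) * (-1) ^ t) * (-1) ^ t := by ring
    _ = (-1) ^ s * (-1) ^ t := by rw [h1]

section Telescope

lemma powerset_map' {α β : Type*} (f : α ↪ β) (s : Finset α) :
    (s.map f).powerset = s.powerset.map (Finset.mapEmbedding f).toEmbedding := by
  have hme : ∀ u : Finset α, (Finset.mapEmbedding f).toEmbedding u = u.map f := fun u => rfl
  ext t
  simp only [Finset.mem_powerset, Finset.mem_map, Finset.subset_map_iff, hme]
  constructor
  · rintro ⟨u, hu, rfl⟩
    exact ⟨u, hu, rfl⟩
  · rintro ⟨u, hu, rfl⟩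
    exact ⟨u, hu, rfl⟩

variable (m : ℕ)

def Mset (r : ℕ) : Finset ℕ := (Finset.Icc 1 (r - 1)).image (fun c => m * c)

def Hset (k j : ℕ) : Finset ℕ := (Finset.Icc (j + 1) (k - 1)).image (fun c => m * c)

noncomputable def Pfun (k : ℕ) : ℤ :=
  ∑ T ∈ (Mset m k).powerset, (-1 : ℤ) ^ T.card * Asub (m * k) T

noncomputable def Qfun (k j : ℕ) : ℤ :=
  ∑ T ∈ (Hset m k j).powerset, (-1 : ℤ) ^ T.card * Asub (m * k) T

variable (hm : 1 ≤ m)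

lemma Hset_zero (k : ℕ) : Hset m k 0 = Mset m k := rfl

lemma Pfun_eq_Qfun (k : ℕ) : Pfun m k = Qfun m k 0 := rfl

lemma Qfun_last (k j : ℕ) (h : k - 1 ≤ j) : Qfun m k j = (eulerNum (m * k) : ℤ) := by
  unfold Qfun
  have : Hset m k j = ∅ := by
    unfold Hset
    rw [Finset.Icc_eq_empty (by omega), Finset.image_empty]
  rw [this, Finset.powerset_empty, Finset.sum_singleton, Finset.card_empty, pow_zero, one_mul,
    Asub_empty]

include hm

lemma Hset_insert (k j : ℕ) (h : j + 1 ≤ k - 1) :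
    Hset m k j = insert (m * (j + 1)) (Hset m k (j + 1)) := by
  unfold Hset
  have : Finset.Icc (j + 1) (k - 1) = insert (j + 1) (Finset.Icc (j + 2) (k - 1)) := by
    ext x; simp only [Finset.mem_Icc, Finset.mem_insert]; omega
  rw [this, Finset.image_insert]

lemma not_mem_Hset (k j : ℕ) : m * (j + 1) ∉ Hset m k (j + 1) := by
  unfold Hset
  simp only [Finset.mem_image, Finset.mem_Icc]
  rintro ⟨c, hc, hce⟩
  have : c = j + 1 := Nat.eq_of_mul_eq_mul_left (by omega) hce
  omega

lemma Hset_eq_map (k j : ℕ) :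
    Hset m k (j + 1) = (Mset m (k - (j + 1))).map (shiftEmb (m * (j + 1))) := by
  unfold Hset Mset
  ext x
  simp only [Finset.mem_image, Finset.mem_map, Finset.mem_Icc, shiftEmb_apply,
    Function.Embedding.coeFn_mk]
  constructor
  · rintro ⟨c, hc, rfl⟩
    refine ⟨m * (c - (j + 1)), ⟨c - (j + 1), by omega, rfl⟩, ?_⟩
    rw [← Nat.mul_add]
    congr 1
    omega
  · rintro ⟨y, ⟨c, hc, rfl⟩, rfl⟩
    refine ⟨c + (j + 1), by omega, ?_⟩
    rw [Nat.mul_add]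
    ring

lemma Mset_bounds (r : ℕ) : ∀ x ∈ Mset m r, 1 ≤ x ∧ x < m * r := by
  intro x hx
  unfold Mset at hx
  simp only [Finset.mem_image, Finset.mem_Icc] at hx
  obtain ⟨c, hc, rfl⟩ := hx
  constructor
  · have := Nat.mul_le_mul hm hc.1
    omega
  · exact mul_lt_mul_of_pos_left (by omega) (by omega)

lemma Mset_card (r : ℕ) : (Mset m r).card = r - 1 := by
  unfold Mset
  rw [Finset.card_image_of_injective _ (fun x y hxy => Nat.eq_of_mul_eq_mul_left (by omega) hxy),
    Nat.card_Icc]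
  omega

lemma Qfun_step (k j : ℕ) (h : j + 1 ≤ k - 1) :
    Qfun m k j = Qfun m k (j + 1)
      - ((m * k).choose (m * (j + 1)) : ℤ) * (eulerNum (m * (j + 1)) : ℤ)
        * Pfun m (k - (j + 1)) := by
  have hab : m * k = m * (j + 1) + m * (k - (j + 1)) := by
    rw [← Nat.mul_add]
    congr 1
    omega
  unfold Qfun
  rw [Hset_insert m hm k j h, Finset.sum_powerset_insert (not_mem_Hset m hm k j)]
  have hmap := Hset_eq_map m hm k j
  have key : ∑ T ∈ (Hset m k (j + 1)).powerset,
      (-1 : ℤ) ^ (insert (m * (j + 1)) T).card * Asub (m * k) (insert (m * (j + 1)) T)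
      = - (((m * k).choose (m * (j + 1)) : ℤ) * (eulerNum (m * (j + 1)) : ℤ)
          * Pfun m (k - (j + 1))) := by
    rw [hmap, powerset_map', Finset.sum_map]
    unfold Pfun
    rw [Finset.mul_sum, ← Finset.sum_neg_distrib]
    apply Finset.sum_congr rfl
    intro T hT
    rw [show (Finset.mapEmbedding (shiftEmb (m * (j + 1)))).toEmbedding T
      = T.map (shiftEmb (m * (j + 1))) from rfl]
    have hcard : (insert (m * (j + 1)) (T.map (shiftEmb (m * (j + 1))))).card
        = T.card + 1 := by
      rw [Finset.card_insert_of_notMem, Finset.card_map]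
      intro hmem
      simp only [Finset.mem_map, shiftEmb_apply, Function.Embedding.coeFn_mk] at hmem
      obtain ⟨x, hxT, hxe⟩ := hmem
      have hx1 := (Mset_bounds m hm (k - (j + 1)) x (Finset.mem_powerset.mp hT hxT)).1
      omega
    rw [hcard]
    rw [show Asub (m * k) (insert (m * (j + 1)) (T.map (shiftEmb (m * (j + 1)))))
        = Asub (m * (j + 1) + m * (k - (j + 1)))
            (insert (m * (j + 1)) (T.map (shiftEmb (m * (j + 1))))) from by rw [← hab]]
    rw [Asub_split]
    rw [← hab]
    push_cast
    ring
  rw [key]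
  ring

lemma Qfun_unroll (k : ℕ) : ∀ d j, j + d = k - 1 →
    Qfun m k j = (eulerNum (m * k) : ℤ)
      - ∑ c ∈ Finset.Icc (j + 1) (k - 1),
          ((m * k).choose (m * c) : ℤ) * (eulerNum (m * c) : ℤ) * Pfun m (k - c) := by
  intro d
  induction d with
  | zero =>
    intro j hj
    rw [Qfun_last m k j (by omega), Finset.Icc_eq_empty (by omega), Finset.sum_empty, sub_zero]
  | succ d ih =>
    intro j hj
    rw [Qfun_step m hm k j (by omega), ih (j + 1) (by omega)]
    have : Finset.Icc (j + 1) (k - 1) = insert (j + 1) (Finset.Icc (j + 2) (k - 1)) := by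
      ext x; simp only [Finset.mem_Icc, Finset.mem_insert]; omega
    rw [this, Finset.sum_insert (by simp only [Finset.mem_Icc]; omega)]
    ring

lemma Aex_eq_Pfun (k : ℕ) :
    (Aex (m * k) (Mset m k) : ℤ) = (-1 : ℤ) ^ (k - 1) * Pfun m k := by
  rw [moebius (Mset m k) (Mset_bounds m hm k)]
  unfold Pfun
  rw [Finset.mul_sum]
  apply Finset.sum_congr rfl
  intro T hT
  rw [Finset.mem_powerset] at hT
  have hcard : (Mset m k \ T).card = (k - 1) - T.card := by
    rw [Finset.card_sdiff_of_subset hT, Mset_card m hm k]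
  have htle : T.card ≤ k - 1 := by
    have := Finset.card_le_card hT
    rwa [Mset_card m hm k] at this
  rw [hcard, neg_pow_sub_helper htle]
  ring

end Telescope

lemma neg_pow_flip {e : ℕ} {x y : ℤ} (h : x = (-1) ^ e * y) : y = (-1) ^ e * x := by
  rw [h, ← mul_assoc, ← pow_add, Even.neg_one_pow ⟨e, by omega⟩, one_mul]

lemma neg_one_pow_par {a b : ℕ} (h : a % 2 = b % 2) : (-1 : ℤ) ^ a = (-1) ^ b := by
  rcases Nat.mod_two_eq_zero_or_one a with ha | ha
  · rw [(Nat.even_iff.mpr ha).neg_one_pow, (Nat.even_iff.mpr (by omega)).neg_one_pow]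
  · rw [(Nat.odd_iff.mpr ha).neg_one_pow, (Nat.odd_iff.mpr (by omega)).neg_one_pow]

lemma card_pm_zero (P : Pm 0 → Prop) (h : ∀ σ, P σ) : Nat.card {σ : Pm 0 // P σ} = 1 := by
  rw [Nat.card_congr (Equiv.subtypeUnivEquiv h), Nat.card_eq_fintype_card, Fintype.card_perm]
  simp

lemma Aex_zero (T : Finset ℕ) : Aex 0 T = 1 := by
  unfold Aex
  exact card_pm_zero _ (fun σ i h1 h2 => absurd h2 (by omega))

lemma eulerNum_zero : eulerNum 0 = 1 := by
  unfold eulerNum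
  exact card_pm_zero _ (fun σ i h1 h2 => absurd h2 (by omega))

lemma s_recurrence (m k : ℕ) (hm : 1 ≤ m) (hk : 1 ≤ k) :
    (Aex (m * k) (Mset m k) : ℤ)
      = ∑ c ∈ Finset.Icc 1 k, (-1 : ℤ) ^ (c + 1) * ((m * k).choose (m * c) : ℤ)
          * (eulerNum (m * c) : ℤ) * (Aex (m * (k - c)) (Mset m (k - c)) : ℤ) := by
  have hP := Aex_eq_Pfun m hm k
  have hQ := Qfun_unroll m hm k (k - 1) 0 (by omega)
  rw [← Pfun_eq_Qfun] at hQ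
  rw [hQ] at hP
  rw [hP]
  rw [show Finset.Icc 1 k = insert k (Finset.Icc 1 (k - 1)) from by
    ext x; simp only [Finset.mem_Icc, Finset.mem_insert]; omega]
  rw [Finset.sum_insert (by simp only [Finset.mem_Icc]; omega)]
  rw [mul_sub, Finset.mul_sum]
  have hterm : ∀ c ∈ Finset.Icc 1 (k - 1),
      (-1 : ℤ) ^ (k - 1) * (((m * k).choose (m * c) : ℤ) * (eulerNum (m * c) : ℤ)
        * Pfun m (k - c))
      = - ((-1 : ℤ) ^ (c + 1) * ((m * k).choose (m * c) : ℤ) * (eulerNum (m * c) : ℤ)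
          * (Aex (m * (k - c)) (Mset m (k - c)) : ℤ)) := by
    intro c hc
    simp only [Finset.mem_Icc] at hc
    rw [neg_pow_flip (Aex_eq_Pfun m hm (k - c))]
    have hsign : (-1 : ℤ) ^ (k - 1) * (-1 : ℤ) ^ (k - c - 1) = - (-1 : ℤ) ^ (c + 1) := by
      rw [← pow_add]
      have : -(-1 : ℤ) ^ (c + 1) = (-1) ^ (c + 2) := by ring
      rw [this]
      exact neg_one_pow_par (by omega)
    calc (-1 : ℤ) ^ (k - 1) * (((m * k).choose (m * c) : ℤ) * (eulerNum (m * c) : ℤ)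
          * ((-1 : ℤ) ^ (k - c - 1) * (Aex (m * (k - c)) (Mset m (k - c)) : ℤ)))
        = ((-1 : ℤ) ^ (k - 1) * (-1 : ℤ) ^ (k - c - 1)) * (((m * k).choose (m * c) : ℤ)
            * (eulerNum (m * c) : ℤ) * (Aex (m * (k - c)) (Mset m (k - c)) : ℤ)) := by ring
      _ = _ := by rw [hsign]; ring
  rw [Finset.sum_congr rfl hterm]
  have hlast : (-1 : ℤ) ^ (k + 1) * ((m * k).choose (m * k) : ℤ) * (eulerNum (m * k) : ℤ)
      * (Aex (m * (k - k)) (Mset m (k - k)) : ℤ) = (-1 : ℤ) ^ (k - 1) * (eulerNum (m * k) : ℤ) := by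
    rw [Nat.sub_self, Nat.choose_self, show m * 0 = 0 from rfl, Aex_zero]
    rw [show ((-1 : ℤ) ^ (k + 1)) = (-1) ^ (k - 1) from neg_one_pow_par (by omega)]
    push_cast
    ring
  rw [hlast, Finset.sum_neg_distrib]
  ring

lemma sCount_zero (m : ℕ) : sCount m 0 = 1 := by
  unfold sCount
  rw [if_pos (dvd_zero m)]
  exact card_pm_zero _ (fun σ i =>
    ⟨fun h => absurd h.2.1 (by omega), fun h => absurd h.2.1 (by omega)⟩)

lemma sCount_not_dvd {m n : ℕ} (h : ¬ m ∣ n) : sCount m n = 0 := by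
  unfold sCount; rw [if_neg h]

lemma sCount_mul (m k : ℕ) (hm : 1 ≤ m) : sCount m (m * k) = Aex (m * k) (Mset m k) := by
  unfold sCount Aex
  rw [if_pos ⟨k, rfl⟩]
  apply Nat.card_congr; apply Equiv.subtypeEquivRight; intro σ
  have hmem : ∀ i, 1 ≤ i → i < m * k → ((i ∈ Mset m k) ↔ m ∣ i) := by
    intro i h1 h2
    unfold Mset
    simp only [Finset.mem_image, Finset.mem_Icc]
    constructor
    · rintro ⟨c, hc, rfl⟩; exact ⟨c, rfl⟩
    · rintro ⟨c, rfl⟩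
      refine ⟨c, ⟨?_, ?_⟩, rfl⟩
      · rcases Nat.eq_zero_or_pos c with rfl | hc
        · simp at h1
        · exact hc
      · have := Nat.lt_of_mul_lt_mul_left h2
        omega
  constructor
  · intro H i h1 h2
    rw [H i]
    constructor
    · rintro ⟨_, _, hdvd⟩; exact (hmem i h1 h2).mpr hdvd
    · intro hmm; exact ⟨h1, h2, (hmem i h1 h2).mp hmm⟩
  · intro H i
    constructor
    · intro had
      have h1 : 1 ≤ i := had.1
      have h2 : i < m * k := had.2.1
      exact ⟨h1, h2, (hmem i h1 h2).mp ((H i h1 h2).mp had)⟩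
    · rintro ⟨h1, h2, hdvd⟩
      exact (H i h1 h2).mpr ((hmem i h1 h2).mpr hdvd)

lemma final_sum (m k : ℕ) (hm : 1 ≤ m) (hk : 1 ≤ k) :
    ∑ c ∈ Finset.range (k + 1),
      ((-1 : ℚ) ^ c * (eulerNum (m * c) : ℚ) / ((m * c).factorial : ℚ))
        * ((sCount m (m * (k - c)) : ℚ) / ((m * (k - c)).factorial : ℚ)) = 0 := by
  have key := s_recurrence m k hm hk
  have keyQ := congrArg (fun z : ℤ => (z : ℚ)) key
  push_cast at keyQ
  -- keyQ : (Aex (m*k) (Mset m k) : ℚ) = ∑ c ∈ Icc 1 k, (-1)^(c+1) * choose * E * Aex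
  have hSrw : ∀ r, (sCount m (m * r) : ℚ) = (Aex (m * r) (Mset m r) : ℚ) := by
    intro r; rw [sCount_mul m r hm]
  rw [show Finset.range (k + 1) = insert 0 (Finset.Icc 1 k) from by
    ext x; simp only [Finset.mem_range, Finset.mem_insert, Finset.mem_Icc]; omega]
  rw [Finset.sum_insert (by simp)]
  have hfac0 : ∀ r : ℕ, ((r.factorial : ℚ)) ≠ 0 := fun r =>
    Nat.cast_ne_zero.mpr (Nat.factorial_ne_zero r)
  have hfact : ∀ c ∈ Finset.Icc 1 k, ((m * k).choose (m * c) : ℚ)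
      = ((m * k).factorial : ℚ) / (((m * c).factorial : ℚ) * ((m * (k - c)).factorial : ℚ)) := by
    intro c hc
    simp only [Finset.mem_Icc] at hc
    have hle : m * c ≤ m * k := Nat.mul_le_mul_left m hc.2
    rw [Nat.cast_choose ℚ hle]
    congr 2
    rw [Nat.mul_sub_left_distrib]
  have hsum : ∑ c ∈ Finset.Icc 1 k,
      ((-1 : ℚ) ^ c * (eulerNum (m * c) : ℚ) / ((m * c).factorial : ℚ))
        * ((sCount m (m * (k - c)) : ℚ) / ((m * (k - c)).factorial : ℚ))
      = (-(1 : ℚ) / ((m * k).factorial : ℚ)) * ∑ c ∈ Finset.Icc 1 k,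
          (-1 : ℚ) ^ (c + 1) * ((m * k).choose (m * c) : ℚ) * (eulerNum (m * c) : ℚ)
            * (Aex (m * (k - c)) (Mset m (k - c)) : ℚ) := by
    rw [Finset.mul_sum]
    apply Finset.sum_congr rfl
    intro c hc
    rw [hfact c hc, hSrw]
    field_simp
    ring
  rw [hsum, ← keyQ]
  rw [show m * 0 = 0 from rfl, show k - 0 = k from rfl, hSrw k]
  rw [eulerNum_zero]
  simp only [Nat.factorial_zero, pow_zero, Nat.cast_one]
  field_simp
  ring


/-- for `m ≥ 1`, in `ℚ⟦X⟧`,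
`(Σ_k (−1)ᵏ·E_{mk}·X^{mk}/(mk)!) · (Σₙ sₘ(n)·Xⁿ/n!) = 1`. -/
theorem statement15 (m : ℕ) (hm : 1 ≤ m) :
    (PowerSeries.mk (fun n : ℕ =>
        if m ∣ n then ((-1 : ℚ)) ^ (n / m) * (eulerNum n : ℚ) / n.factorial else 0)) *
      (PowerSeries.mk (fun n : ℕ => (sCount m n : ℚ) / n.factorial)) = 1 := by
  apply PowerSeries.ext
  intro n
  rw [PowerSeries.coeff_mul, PowerSeries.coeff_one]
  rw [Finset.Nat.sum_antidiagonal_eq_sum_range_succ_mk]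
  simp only [PowerSeries.coeff_mk]
  by_cases hn : n = 0
  · subst hn
    rw [if_pos rfl, Finset.sum_range_one]
    rw [if_pos (dvd_zero m)]
    rw [Nat.zero_div, eulerNum_zero, Nat.sub_zero, sCount_zero]
    norm_num
  · rw [if_neg hn]
    by_cases hdvd : m ∣ n
    · obtain ⟨k, rfl⟩ := hdvd
      have hk : 1 ≤ k := by
        rcases Nat.eq_zero_or_pos k with rfl | h
        · simp at hn
        · exact h
      have hsub : (Finset.range (k + 1)).image (fun c => m * c) ⊆ Finset.range (m * k + 1) := by
        intro x hx
        simp only [Finset.mem_image, Finset.mem_range] at hx ⊢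
        obtain ⟨c, hc, rfl⟩ := hx
        have : m * c ≤ m * k := Nat.mul_le_mul_left m (by omega)
        omega
      have hvanish : ∀ i ∈ Finset.range (m * k + 1),
          i ∉ (Finset.range (k + 1)).image (fun c => m * c) →
          (if m ∣ i then ((-1 : ℚ)) ^ (i / m) * (eulerNum i : ℚ) / i.factorial else 0)
            * ((sCount m (m * k - i) : ℚ) / (m * k - i).factorial) = 0 := by
        intro i hi hnotmem
        rcases Classical.em (m ∣ i) with ⟨c, rfl⟩ | hmi
        · exfalso
          apply hnotmem
          simp only [Finset.mem_image, Finset.mem_range]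
          refine ⟨c, ?_, rfl⟩
          simp only [Finset.mem_range] at hi
          by_contra hck
          have : m * (k + 1) ≤ m * c := Nat.mul_le_mul_left m (by omega)
          rw [Nat.mul_add] at this
          omega
        · rw [if_neg hmi, zero_mul]
      rw [← Finset.sum_subset hsub hvanish]
      rw [Finset.sum_image (fun x hx y hy h => Nat.eq_of_mul_eq_mul_left (by omega) h)]
      have hterm : ∀ c ∈ Finset.range (k + 1),
          (if m ∣ m * c then ((-1 : ℚ)) ^ ((m * c) / m) * (eulerNum (m * c) : ℚ)
              / (m * c).factorial else 0)
            * ((sCount m (m * k - m * c) : ℚ) / (m * k - m * c).factorial)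
          = ((-1 : ℚ) ^ c * (eulerNum (m * c) : ℚ) / ((m * c).factorial : ℚ))
              * ((sCount m (m * (k - c)) : ℚ) / ((m * (k - c)).factorial : ℚ)) := by
        intro c _
        rw [if_pos ⟨c, rfl⟩, Nat.mul_div_cancel_left c (by omega), ← Nat.mul_sub_left_distrib]
      rw [Finset.sum_congr rfl hterm]
      exact final_sum m k hm hk
    · apply Finset.sum_eq_zero
      intro i hi
      rcases Classical.em (m ∣ i) with hmi | hmi
      · have hnd : ¬ m ∣ (n - i) := by
          intro hd
          apply hdvd
          simp only [Finset.mem_range] at hi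
          have : n = (n - i) + i := by omega
          rw [this]
          exact Nat.dvd_add hd hmi
        rw [sCount_not_dvd hnd, Nat.cast_zero, zero_div, mul_zero]
      · rw [if_neg hmi, zero_mul]
end
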